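/- arXiv:2107.02956 — 2 statements merged into one kernel-verified Lean document; each statement's English description precedes it below -/
import Mathlib

section
/- Let σ be a signature and let 𝐀 and 𝐁 be σ-structures. There exist doubly stochastic matrices X (rows indexed by B, columns by A) and Y (rows indexed by 𝒞_𝐁, columns by 𝒞_𝐀) such that X M_𝐀^ℓ = M_𝐁^ℓ Y and M_𝐀^ℓ Yᵀ = Xᵀ M_𝐁^ℓ for every label ℓ ∈ L, if and only if 𝐀 and 𝐁 have the same iterated degree sequence. -/
attribute [local instance] Classical.propDecidable

set_option maxHeartbeats 1000000

noncomputable section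

/-- A relational structure over the signature given by symbols `σ` with arities `ar`,
with universe `A`: for each relation symbol, a set of tuples. -/
structure Struct (σ : Type) (ar : σ → ℕ) (A : Type) : Type where
  rel : ∀ R : σ, Set (Fin (ar R) → A)

variable {σ : Type} {ar : σ → ℕ}

/-- The set of constraints of a structure: pairs `(R, 𝐚)` with `𝐚 ∈ R(AA)`. -/
def Cons {A : Type} (AA : Struct σ ar A) : Type :=
  Σ R : σ, {u : Fin (ar R) → A // u ∈ AA.rel R}

instance Cons.finite {A : Type} [Finite σ] [Finite A] {AA : Struct σ ar A} :
    Finite (Cons AA) :=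
  inferInstanceAs (Finite (Σ R : σ, {u : Fin (ar R) → A // u ∈ AA.rel R}))

noncomputable instance Cons.fintype {A : Type} [Fintype σ] [Fintype A] {AA : Struct σ ar A} :
    Fintype (Cons AA) := Fintype.ofFinite _

/-- Labels `(S, R)` with `R ∈ σ` and `S ⊆ [arity R]`. -/
abbrev Label (σ : Type) (ar : σ → ℕ) : Type := Σ R : σ, Finset (Fin (ar R))

/-- The entry of the matrix representation `M_AA` of a structure at `(a, R(𝐚))`:
the label `(S, R)` with `S = {i : 𝐚[i] = a}`. -/
def lab {A : Type} (AA : Struct σ ar A) (a : A) (c : Cons AA) : Label σ ar :=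
  ⟨c.1, Finset.univ.filter fun i => c.2.1 i = a⟩

/-- The 0/1 matrix `M_AA^ℓ`. -/
def labMat {A : Type} (AA : Struct σ ar A) (ℓ : Label σ ar) : Matrix A (Cons AA) ℝ :=
  fun a c => if lab AA a c = ℓ then 1 else 0

/-- A doubly stochastic matrix: non-negative entries, all rows and all columns sum to 1. -/
def IsDoublyStochastic {α β : Type} [Fintype α] [Fintype β] (X : Matrix α β ℝ) : Prop :=
  (∀ i j, 0 ≤ X i j) ∧ (∀ i, ∑ j, X i j = 1) ∧ (∀ j, ∑ i, X i j = 1)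

/-- A left stochastic matrix: non-negative entries, all columns sum to 1. -/
def IsLeftStochastic {α β : Type} [Fintype α] (X : Matrix α β ℝ) : Prop :=
  (∀ i j, 0 ≤ X i j) ∧ (∀ j, ∑ i, X i j = 1)

/-- Fractional isomorphism: doubly stochastic `X`, `Y` with
`X M_AA^ℓ = M_BB^ℓ Y` and `M_AA^ℓ Yᵀ = Xᵀ M_BB^ℓ` for every label `ℓ`. -/
def FracIso {A B : Type} [Fintype σ] [Fintype A] [Fintype B]
    (AA : Struct σ ar A) (BB : Struct σ ar B) : Prop :=
  ∃ (X : Matrix B A ℝ) (Y : Matrix (Cons BB) (Cons AA) ℝ),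
    IsDoublyStochastic X ∧ IsDoublyStochastic Y ∧
    ∀ ℓ : Label σ ar,
      X * labMat AA ℓ = labMat BB ℓ * Y ∧
      labMat AA ℓ * Y.transpose = X.transpose * labMat BB ℓ

/-- The type of iterated degrees of depth `k`. -/
def DegT (L : Type) : ℕ → Type
  | 0 => Bool
  | k + 1 => Multiset (L × DegT L k)

/-- The iterated degree `δ_k` of an element or a constraint of a structure. -/
def iterDeg {A : Type} [Fintype σ] [Fintype A] (AA : Struct σ ar A) :
    (k : ℕ) → A ⊕ Cons AA → DegT (Label σ ar) k
  | 0, x => x.isLeft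
  | k + 1, Sum.inl a =>
      (Finset.univ.val.map fun c : Cons AA => (lab AA a c, iterDeg AA k (Sum.inr c)) :
        Multiset (Label σ ar × DegT (Label σ ar) k))
  | k + 1, Sum.inr c =>
      (Finset.univ.val.map fun a : A => (lab AA a c, iterDeg AA k (Sum.inl a)) :
        Multiset (Label σ ar × DegT (Label σ ar) k))

/-- Two structures have the same iterated degree sequence. -/
def SameIterDeg {A B : Type} [Fintype σ] [Fintype A] [Fintype B]
    (AA : Struct σ ar A) (BB : Struct σ ar B) : Prop :=
  ∀ k : ℕ,
    Multiset.map (iterDeg AA k) (Finset.univ.val : Multiset (A ⊕ Cons AA)) =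
    Multiset.map (iterDeg BB k) (Finset.univ.val : Multiset (B ⊕ Cons BB))
/-- An equitable partition of a structure, given by index maps `p` (on the universe)
and `q` (on the constraints) together with its parameters `cpar`, `dpar`. -/
def IsEquitable {A : Type} (AA : Struct σ ar A) {I : Type u} {J : Type v}
    (p : A → I) (q : Cons AA → J)
    (cpar : Label σ ar → I → J → ℕ) (dpar : Label σ ar → J → I → ℕ) : Prop :=
  (∀ (a : A) (ℓ : Label σ ar) (j : J),
      Nat.card {c : Cons AA // q c = j ∧ lab AA a c = ℓ} = cpar ℓ (p a) j) ∧
  (∀ (c : Cons AA) (ℓ : Label σ ar) (i : I),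
      Nat.card {a : A // p a = i ∧ lab AA a c = ℓ} = dpar ℓ (q c) i)

/-- Two structures have a common equitable partition: equitable partitions with the same
index sets, the same parameters, and corresponding classes of equal sizes. -/
def CommonEquitable {A B : Type} (AA : Struct σ ar A) (BB : Struct σ ar B) : Prop :=
  ∃ (I J : Type) (pA : A → I) (qA : Cons AA → J) (pB : B → I) (qB : Cons BB → J)
    (cpar : Label σ ar → I → J → ℕ) (dpar : Label σ ar → J → I → ℕ),
    IsEquitable AA pA qA cpar dpar ∧ IsEquitable BB pB qB cpar dpar ∧
    (∀ i : I, Nat.card {a : A // pA a = i} = Nat.card {b : B // pB b = i}) ∧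
    (∀ j : J, Nat.card {c : Cons AA // qA c = j} = Nat.card {c : Cons BB // qB c = j})

/-- `h` is a homomorphism from `AA` to `BB`. -/
def IsHom {A B : Type} (AA : Struct σ ar A) (BB : Struct σ ar B) (h : A → B) : Prop :=
  ∀ (R : σ) (u : Fin (ar R) → A), u ∈ AA.rel R → (fun i => h (u i)) ∈ BB.rel R

/-- The number of homomorphisms from `AA` to `BB`. -/
def homCount {A B : Type} (AA : Struct σ ar A) (BB : Struct σ ar B) : ℕ :=
  Nat.card {h : A → B // IsHom AA BB h}

/-- The number of homomorphisms from `(TT, t)` to `(DD, d)` (with a designated element). -/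
def rhomCount {T D : Type} (TT : Struct σ ar T) (t : T) (DD : Struct σ ar D) (d : D) : ℕ :=
  Nat.card {h : T → D // IsHom TT DD h ∧ h t = d}

/-- The factor graph of a structure: bipartite graph on elements and constraints. -/
def factorGraph {A : Type} (AA : Struct σ ar A) : SimpleGraph (A ⊕ Cons AA) :=
  SimpleGraph.fromRel fun x y =>
    ∃ (a : A) (c : Cons AA), x = Sum.inl a ∧ y = Sum.inr c ∧ ∃ i, c.2.1 i = a

/-- A structure is an ftree if its factor graph is a tree. -/
def IsFtree {A : Type} (AA : Struct σ ar A) : Prop := (factorGraph AA).IsTree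
/-- The set `{𝐚}` of elements occurring in the tuple of a constraint, as a Finset. -/
def tsupp {A : Type} {AA : Struct σ ar A} (c : Cons AA) : Finset A :=
  Finset.univ.image c.2.1

lemma mem_tsupp {A : Type} {AA : Struct σ ar A} (c : Cons AA) (i : Fin (ar c.1)) :
    c.2.1 i ∈ tsupp c :=
  Finset.mem_image_of_mem _ (Finset.mem_univ i)

/-- Feasibility of the system `SA^k(AA, BB)`. -/
def SAfeasible {A B : Type} [Fintype B] (k : ℕ)
    (AA : Struct σ ar A) (BB : Struct σ ar B) : Prop :=
  ∃ (pV : (V : Finset A) → ({x // x ∈ V} → B) → ℝ)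
    (pC : (c : Cons AA) → ({x // x ∈ tsupp c} → B) → ℝ),
    -- all variables take values in [0,1]
    (∀ (V : Finset A) (f : {x // x ∈ V} → B),
        V.Nonempty → V.card ≤ k → 0 ≤ pV V f ∧ pV V f ≤ 1) ∧
    (∀ (c : Cons AA) (f : {x // x ∈ tsupp c} → B), 0 ≤ pC c f ∧ pC c f ≤ 1) ∧
    -- (SA1)
    (∀ V : Finset A, V.Nonempty → V.card ≤ k →
        ∑ f : {x // x ∈ V} → B, pV V f = 1) ∧
    -- (SA2)
    (∀ (U V : Finset A) (hUV : U ⊆ V), U.Nonempty → V.card ≤ k →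
        ∀ f : {x // x ∈ U} → B,
          pV U f = ∑ g : {x // x ∈ V} → B,
            if ∀ u : {x // x ∈ U}, g ⟨u.1, hUV u.2⟩ = f u then pV V g else 0) ∧
    -- (SA3)
    (∀ (c : Cons AA) (U : Finset A) (hU : U ⊆ tsupp c), U.Nonempty → U.card ≤ k →
        ∀ f : {x // x ∈ U} → B,
          pV U f = ∑ g : {x // x ∈ tsupp c} → B,
            if ∀ u : {x // x ∈ U}, g ⟨u.1, hU u.2⟩ = f u then pC c g else 0) ∧
    -- (SA4)
    (∀ (c : Cons AA) (f : {x // x ∈ tsupp c} → B),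
        (fun i => f ⟨c.2.1 i, mem_tsupp c i⟩) ∉ BB.rel c.1 → pC c f = 0)

/-- The relation symbols of the signature `σ*_k`. -/
inductive StarSym (σ : Type) (ar : σ → ℕ) (k : ℕ) : Type
  | TS (j : Fin k) (S : Finset (Fin (j.1 + 1)))
  | TI (j j' : Fin k) (iv : Fin (j'.1 + 1) → Fin (j.1 + 1))
  | RS (R : σ) (S : Finset (Fin (ar R)))
  | RI (R : σ) (j : Fin k) (iv : Fin (j.1 + 1) → Fin (ar R))

/-- Arities for `σ*_k`. -/
def starAr {k : ℕ} : StarSym σ ar k → ℕ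
  | .TS _ _ => 1
  | .TI _ _ _ => 2
  | .RS _ _ => 1
  | .RI _ _ _ => 2

/-- The universe of `AA*_k`: all tuples of length `1 ≤ j ≤ k` together with the constraints. -/
def StarUniv {A : Type} (AA : Struct σ ar A) (k : ℕ) : Type :=
  ((j : Fin k) × (Fin (j.1 + 1) → A)) ⊕ Cons AA

instance StarUniv.finite {A : Type} [Finite σ] [Finite A] {AA : Struct σ ar A} {k : ℕ} :
    Finite (StarUniv AA k) :=
  inferInstanceAs (Finite (((j : Fin k) × (Fin (j.1 + 1) → A)) ⊕ Cons AA))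

noncomputable instance StarUniv.fintype {A : Type} [Fintype σ] [Fintype A]
    {AA : Struct σ ar A} {k : ℕ} : Fintype (StarUniv AA k) := Fintype.ofFinite _

/-- The structure `AA*_k`. -/
def starStruct {A : Type} (AA : Struct σ ar A) (k : ℕ) :
    Struct (StarSym σ ar k) starAr (StarUniv AA k) where
  rel
    | .TS j S => {u | ∃ v : Fin (j.1 + 1) → A,
        (∀ i ∈ S, ∀ i' ∈ S, v i = v i') ∧ u = fun _ => Sum.inl ⟨j, v⟩}
    | .TI j j' iv => {u | ∃ v : Fin (j.1 + 1) → A,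
        u = ![Sum.inl ⟨j, v⟩, Sum.inl ⟨j', v ∘ iv⟩]}
    | .RS R S => {u | ∃ (v : Fin (ar R) → A) (hv : v ∈ AA.rel R),
        (∀ i ∈ S, ∀ i' ∈ S, v i = v i') ∧ u = fun _ => Sum.inr ⟨R, ⟨v, hv⟩⟩}
    | .RI R j iv => {u | ∃ (v : Fin (ar R) → A) (hv : v ∈ AA.rel R),
        u = ![Sum.inr ⟨R, ⟨v, hv⟩⟩, Sum.inl ⟨j, v ∘ iv⟩]}

/-- `AA ≡_k BB` : the structures `AA*_k` and `BB*_k` have a common equitable partition. -/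
def EquivK {A B : Type} (k : ℕ) (AA : Struct σ ar A) (BB : Struct σ ar B) : Prop :=
  CommonEquitable (starStruct AA k) (starStruct BB k)

/-- A bundled σ-structure with finite universe. -/
structure FinStruct (σ : Type) (ar : σ → ℕ) : Type 1 where
  carrier : Type
  [fin : Fintype carrier]
  str : Struct σ ar carrier

/-- One step in a chain: either a homomorphism exists, or the structures are
`≡_1`-equivalent (i.e. have a common equitable partition). -/
def FStep (X Y : FinStruct σ ar) : Prop :=
  (∃ h : X.carrier → Y.carrier, IsHom X.str Y.str h) ∨ CommonEquitable X.str Y.str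

/-- The structure `AA` has treewidth `< k`: there is a tree-decomposition all of whose
bags have at most `k` elements. -/
def HasTreewidthLT {A : Type} (AA : Struct σ ar A) (k : ℕ) : Prop :=
  ∃ (V : Type) (G : SimpleGraph V) (β : V → Finset A),
    G.IsTree ∧
    (∀ c : Cons AA, ∃ v : V, ∀ i, c.2.1 i ∈ β v) ∧
    (∀ (a : A) (u v : V), a ∈ β u → a ∈ β v →
      ∀ p : G.Walk u v, p.IsPath → ∀ w ∈ p.support, a ∈ β w) ∧
    (∀ v : V, (β v).card ≤ k)
/-- The adjacency matrix of a graph (a structure with one binary relation). -/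
def adjMat {A : Type} (AA : Struct Unit (fun _ => 2) A) : Matrix A A ℝ :=
  fun a a' => if ![a, a'] ∈ AA.rel () then 1 else 0

/-- A matrix is decomposable if, up to partitioning rows and columns into two
(nontrivial) blocks, it is a direct sum. -/
def MDecomposable {V W : Type} (M : Matrix V W ℝ) : Prop :=
  ∃ (SV : Set V) (SW : Set W),
    (SV.Nonempty ∨ SW.Nonempty) ∧ (SVᶜ.Nonempty ∨ SWᶜ.Nonempty) ∧
    ∀ v w, (v ∈ SV ∧ w ∉ SW) ∨ (v ∉ SV ∧ w ∈ SW) → M v w = 0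

/-- A bundled rooted ftree. -/
structure RootedFtree (σ : Type) (ar : σ → ℕ) : Type 1 where
  carrier : Type
  [fin : Fintype carrier]
  str : Struct σ ar carrier
  isFtree : IsFtree str
  root : carrier

/-- The profile of an element: the number of homomorphisms from each rooted ftree
mapping the root to it. -/
def degProfile {D : Type} (DD : Struct σ ar D) (d : D) : RootedFtree σ ar → ℕ :=
  fun F => rhomCount F.str F.root DD d

/-- The class of a constraint: its relation symbol, its equality pattern, and the
`degProfile`-classes of its coordinates. -/
def qProfile {D : Type} (DD : Struct σ ar D) (c : Cons DD) :
    Σ R : σ, Set (Fin (ar R) × Fin (ar R)) × (Fin (ar R) → (RootedFtree σ ar → ℕ)) :=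
  ⟨c.1, ({p | c.2.1 p.1 = c.2.1 p.2}, fun s => degProfile DD (c.2.1 s))⟩

/-- Number of homomorphisms with a designated element and a designated constraint. -/
def rhomCount2 {T D : Type} (TT : Struct σ ar T) (t : T) (c : Cons TT)
    (DD : Struct σ ar D) (d : D) (c' : Cons DD) : ℕ :=
  Nat.card {h : T → D // IsHom TT DD h ∧ h t = d ∧
    (⟨c.1, fun i => h (c.2.1 i)⟩ : Σ R : σ, Fin (ar R) → D) = ⟨c'.1, c'.2.1⟩}

/-- `(t, R(𝐭))` can be mapped to `(d, R'(𝐝))`. -/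
def CanMap {T D : Type} {TT : Struct σ ar T} {DD : Struct σ ar D}
    (t : T) (c : Cons TT) (d : D) (c' : Cons DD) : Prop :=
  ∃ hR : c.1 = c'.1,
    (∀ s s' : Fin (ar c.1), c.2.1 s = c.2.1 s' →
        c'.2.1 (Fin.cast (congrArg ar hR) s) = c'.2.1 (Fin.cast (congrArg ar hR) s')) ∧
    (∀ s : Fin (ar c.1), c.2.1 s = t → c'.2.1 (Fin.cast (congrArg ar hR) s) = d)

/-- A substructure of a structure: a subset of the universe together with a subset of
the tuples of each relation, lying inside the subset. -/
structure Substr {A : Type} (AA : Struct σ ar A) : Type where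
  carrier : Set A
  srel : ∀ R : σ, Set (Fin (ar R) → A)
  srel_sub : ∀ R : σ, srel R ⊆ AA.rel R
  srel_mem : ∀ R : σ, ∀ u ∈ srel R, ∀ i, u i ∈ carrier

/-- The substructure as a structure in its own right. -/
def Substr.toStruct {A : Type} {AA : Struct σ ar A} (Q : Substr AA) :
    Struct σ ar {x // x ∈ Q.carrier} where
  rel R := {u | (fun i => (u i).1) ∈ Q.srel R}

/-- Containment of substructures. -/
def Substr.le {A : Type} {AA : Struct σ ar A} (Q Q' : Substr AA) : Prop :=
  Q.carrier ⊆ Q'.carrier ∧ ∀ R : σ, Q.srel R ⊆ Q'.srel R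

/-- A subftree of `TT` avoiding the constraint `c`, containing a unique element of the
tuple of `c`, which moreover participates in exactly one constraint of the subftree. -/
def GoodPiece {T : Type} (TT : Struct σ ar T) (c : Cons TT) (Q : Substr TT) : Prop :=
  IsFtree Q.toStruct ∧
  c.2.1 ∉ Q.srel c.1 ∧
  ∃ x ∈ Q.carrier, (∃ i, c.2.1 i = x) ∧
    (∀ y ∈ Q.carrier, (∃ i, c.2.1 i = y) → y = x) ∧
    (∃! e : Σ R : σ, {u // u ∈ Q.srel R}, ∃ i, e.2.1 i = x)

/-- The collection `TT \ c` of maximal subftrees as above. -/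
def TreeMinus {T : Type} (TT : Struct σ ar T) (c : Cons TT) : Set (Substr TT) :=
  {Q | GoodPiece TT c Q ∧ ∀ Q' : Substr TT, GoodPiece TT c Q' → Q.le Q' → Q'.le Q}

/-- The disjoint union of two structures. -/
def dUnion {A B : Type} (AA : Struct σ ar A) (BB : Struct σ ar B) :
    Struct σ ar (A ⊕ B) where
  rel R := {u | (∃ v ∈ AA.rel R, u = fun i => Sum.inl (v i)) ∨
                (∃ v ∈ BB.rel R, u = fun i => Sum.inr (v i))}

/-- Embedding of constraints of `AA` into constraints of the disjoint union. -/
def consInl {A B : Type} (AA : Struct σ ar A) (BB : Struct σ ar B) (c : Cons AA) :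
    Cons (dUnion AA BB) :=
  ⟨c.1, ⟨fun i => Sum.inl (c.2.1 i), Or.inl ⟨c.2.1, c.2.2, rfl⟩⟩⟩

/-- Embedding of constraints of `BB` into constraints of the disjoint union. -/
def consInr {A B : Type} (AA : Struct σ ar A) (BB : Struct σ ar B) (c : Cons BB) :
    Cons (dUnion AA BB) :=
  ⟨c.1, ⟨fun i => Sum.inr (c.2.1 i), Or.inr ⟨c.2.1, c.2.2, rfl⟩⟩⟩

/-- The stable-degree class of an element of the disjoint union: its full iterated
degree sequence. -/
def degPclass {A B : Type} [Fintype σ] [Fintype A] [Fintype B]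
    (AA : Struct σ ar A) (BB : Struct σ ar B) (x : A ⊕ B) :
    (k : ℕ) → DegT (Label σ ar) k :=
  fun k => iterDeg (dUnion AA BB) k (Sum.inl x)

/-- The stable-degree class of a constraint of the disjoint union. -/
def degQclass {A B : Type} [Fintype σ] [Fintype A] [Fintype B]
    (AA : Struct σ ar A) (BB : Struct σ ar B) (c : Cons (dUnion AA BB)) :
    (k : ℕ) → DegT (Label σ ar) k :=
  fun k => iterDeg (dUnion AA BB) k (Sum.inr c)
/-- The set `Y`: tuples in `(B × [m])^m` with no repeated entries, in which the copy
index of each entry is bounded by the number of occurrences of its `B`-component. -/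
def Ytype (B : Type) (m : ℕ) : Type :=
  {y : Fin m → B × Fin m // Function.Injective y ∧
    ∀ i, ((y i).2 : ℕ) + 1 ≤ Nat.card {j : Fin m // (y j).1 = (y i).1}}

/-- Permuting the coordinates of an element of `Y`. -/
def permY {B : Type} {m : ℕ} (τ : Equiv.Perm (Fin m)) (y : Ytype B m) : Ytype B m :=
  ⟨fun i => y.1 (τ i), y.2.1.comp τ.injective, fun i => by
    have h := y.2.2 (τ i)
    have hc : Nat.card {j : Fin m // (y.1 (τ j)).1 = (y.1 (τ i)).1}
        = Nat.card {j : Fin m // (y.1 j).1 = (y.1 (τ i)).1} :=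
      Nat.card_congr (τ.subtypeEquiv fun j => Iff.rfl)
    exact le_trans h (le_of_eq hc.symm)⟩

/-- The structure `X₁` from the proof of Theorem `thm:SA1`, built from a choice
function `choice` selecting a canonical element of `Y` for each multiset. -/
def X1struct {A B : Type} (AA : Struct σ ar A) (BB : Struct σ ar B) (m : ℕ)
    (choice : (Fin m → B) → Ytype B m) : Struct σ ar (A × Ytype B m) where
  rel R := {u | ∃ a : Fin (ar R) → A, a ∈ AA.rel R ∧
    ∃ tt : Fin m → Fin (ar R) → B,
      (∀ i, tt i ∈ BB.rel R) ∧
      (∀ i s s', a s = a s' → tt i s = tt i s') ∧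
      ∃ τ : Equiv.Perm (Fin m),
        u = fun s => (a s, permY τ (choice fun i => tt i s))}

section Helpers
open Finset

variable {L W Z Z₁ Z₂ : Type}

lemma ncard_eq_filter [Fintype Z] (p : Z → Prop) [DecidablePred p] :
    Nat.card {z // p z} = (Finset.univ.filter p).card := by
  rw [Nat.card_eq_fintype_card]
  have h1 : Fintype.card {z // p z} = @Fintype.card {z // p z} (Subtype.fintype p) :=
    Fintype.card_congr (Equiv.refl _)
  rw [h1, Fintype.card_subtype]

lemma ncard_pair [Fintype Z] (f : Z → L) (g : Z → W) (ℓ : L) (v : W) :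
    Nat.card {z // (f z, g z) = (ℓ, v)} = Nat.card {z // f z = ℓ ∧ g z = v} :=
  Nat.card_congr (Equiv.subtypeEquivRight (fun z => by rw [Prod.ext_iff]))

lemma ncard_sum {α β : Type} [Fintype α] [Fintype β] (p : α ⊕ β → Prop) :
    Nat.card {x // p x}
      = Nat.card {a // p (Sum.inl a)} + Nat.card {b // p (Sum.inr b)} := by
  rw [Nat.card_congr (Equiv.subtypeSum (p := p)), Nat.card_sum]

/-- From equality of fiber cardinalities, get a matching bijection. -/
lemma fibers_equiv [Fintype Z₁] [Fintype Z₂] {f : Z₁ → W} {g : Z₂ → W}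
    (hcard : ∀ w : W, Nat.card {z : Z₁ // f z = w} = Nat.card {z : Z₂ // g z = w}) :
    ∃ e : Z₁ ≃ Z₂, ∀ z, f z = g (e z) := by
  classical
  have hcard' : ∀ w : W, Fintype.card {z : Z₁ // f z = w} = Fintype.card {z : Z₂ // g z = w} := by
    intro w
    have := hcard w
    rwa [Nat.card_eq_fintype_card, Nat.card_eq_fintype_card] at this
  have eqv : ∀ w : W, {z : Z₁ // f z = w} ≃ {z : Z₂ // g z = w} :=
    fun w => Classical.choice ⟨Fintype.equivOfCardEq (hcard' w)⟩
  refine ⟨(Equiv.sigmaFiberEquiv f).symm.trans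
    ((Equiv.sigmaCongrRight eqv).trans (Equiv.sigmaFiberEquiv g)), ?_⟩
  intro z
  exact ((eqv (f z)) ⟨z, rfl⟩).2.symm

/-- Reindexing a universe map along an equivalence. -/
lemma map_univ_reindex [Fintype Z₁] [Fintype Z₂] (e : Z₁ ≃ Z₂) (g : Z₂ → W) :
    Multiset.map (fun z => g (e z)) (Finset.univ.val : Multiset Z₁)
      = Multiset.map g (Finset.univ.val : Multiset Z₂) := by
  have h : (Finset.univ : Finset Z₂) = Finset.univ.map e.toEmbedding := (Finset.map_univ_equiv e).symm
  rw [h, Finset.map_val, Multiset.map_map]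
  rfl

/-- From equality of image multisets over two universes, get a matching bijection. -/
lemma mapEq_equiv [Fintype Z₁] [Fintype Z₂] {f : Z₁ → W} {g : Z₂ → W}
    (h : Multiset.map f (Finset.univ.val) = Multiset.map g (Finset.univ.val)) :
    ∃ e : Z₁ ≃ Z₂, ∀ z, f z = g (e z) := by
  classical
  apply fibers_equiv
  intro w
  rw [ncard_eq_filter, ncard_eq_filter]
  have h1 := congrArg (Multiset.count w) h
  rw [Multiset.count_map, Multiset.count_map] at h1
  have e1 : Multiset.filter (fun z => w = f z) Finset.univ.val
      = Multiset.filter (fun z => f z = w) Finset.univ.val :=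
    Multiset.filter_congr (fun z _ => eq_comm)
  have e2 : Multiset.filter (fun z => w = g z) Finset.univ.val
      = Multiset.filter (fun z => g z = w) Finset.univ.val :=
    Multiset.filter_congr (fun z _ => eq_comm)
  rw [e1, e2] at h1
  exact h1

/-- Converse: equal fiber counts give equal image multisets. -/
lemma mapEq_of_counts [Fintype Z₁] [Fintype Z₂] (f : Z₁ → W) (g : Z₂ → W)
    (h : ∀ w : W, Nat.card {z : Z₁ // f z = w} = Nat.card {z : Z₂ // g z = w}) :
    Multiset.map f (Finset.univ.val) = Multiset.map g (Finset.univ.val) := by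
  obtain ⟨e, hp⟩ := fibers_equiv h
  rw [← map_univ_reindex e g]
  exact Multiset.map_congr rfl (fun z _ => hp z)

/-- Transfer of fiber cards along a matching bijection. -/
lemma ncard_equiv [Fintype Z₁] [Fintype Z₂] (e : Z₁ ≃ Z₂) {f : Z₁ → W} {g : Z₂ → W}
    (hp : ∀ z, f z = g (e z)) (v : W) :
    Nat.card {z // f z = v} = Nat.card {z // g z = v} :=
  Nat.card_congr (e.subtypeEquiv (fun z => by rw [hp z]))

/-- The quadratic trick for doubly stochastic matrices. -/
lemma ds_transfer {α β : Type} [Fintype α] [Fintype β] (X : Matrix β α ℝ)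
    (hpos : ∀ b a, 0 ≤ X b a) (hrow : ∀ b, ∑ a, X b a = 1) (hcol : ∀ a, ∑ b, X b a = 1)
    (u : α → ℝ) (v : β → ℝ)
    (h1 : ∀ b, v b = ∑ a, X b a * u a) (h2 : ∀ a, u a = ∑ b, X b a * v b) :
    ∀ b a, X b a ≠ 0 → u a = v b := by
  have huv : ∑ a, (u a)^2 = ∑ b, (v b)^2 := by
    calc ∑ a, (u a)^2 = ∑ a, u a * ∑ b, X b a * v b := by
          apply Finset.sum_congr rfl; intro a _; rw [← h2 a]; ring
    _ = ∑ a, ∑ b, X b a * u a * v b := by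
          apply Finset.sum_congr rfl; intro a _; rw [Finset.mul_sum]
          apply Finset.sum_congr rfl; intro b _; ring
    _ = ∑ b, ∑ a, X b a * u a * v b := Finset.sum_comm
    _ = ∑ b, (v b)^2 := by
          apply Finset.sum_congr rfl; intro b _
          rw [← Finset.sum_mul, ← h1 b]; ring
  have key : ∑ b, ∑ a, X b a * (u a - v b)^2 = 0 := by
    have expand : ∀ b, ∑ a, X b a * (u a - v b)^2
        = (∑ a, X b a * (u a)^2) - 2 * v b * (∑ a, X b a * u a) + (v b)^2 * (∑ a, X b a) := by
      intro b
      rw [Finset.mul_sum, Finset.mul_sum, ← Finset.sum_sub_distrib, ← Finset.sum_add_distrib]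
      apply Finset.sum_congr rfl; intro a _; ring
    calc ∑ b, ∑ a, X b a * (u a - v b)^2
        = ∑ b, ((∑ a, X b a * (u a)^2) - 2 * v b * (∑ a, X b a * u a) + (v b)^2 * (∑ a, X b a)) :=
          Finset.sum_congr rfl (fun b _ => expand b)
      _ = (∑ b, ∑ a, X b a * (u a)^2) - 2 * (∑ b, (v b)^2) + (∑ b, (v b)^2) := by
          rw [Finset.sum_add_distrib, Finset.sum_sub_distrib]
          congr 1
          · congr 1
            rw [Finset.mul_sum]
            apply Finset.sum_congr rfl; intro b _
            rw [← h1 b]; ring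
          · apply Finset.sum_congr rfl; intro b _
            rw [hrow b]; ring
      _ = (∑ a, (u a)^2) - 2 * (∑ b, (v b)^2) + (∑ b, (v b)^2) := by
          congr 2
          rw [Finset.sum_comm]
          apply Finset.sum_congr rfl; intro a _
          rw [← Finset.sum_mul, hcol a]; ring
      _ = 0 := by rw [huv]; ring
  intro b a hba
  have hterm : ∀ b ∈ (Finset.univ : Finset β), ∑ a, X b a * (u a - v b)^2 = 0 :=
    (Finset.sum_eq_zero_iff_of_nonneg (fun b _ =>
      Finset.sum_nonneg fun a _ => mul_nonneg (hpos b a) (sq_nonneg _))).1 key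
  have hterm2 : X b a * (u a - v b)^2 = 0 := by
    have := (Finset.sum_eq_zero_iff_of_nonneg
      (fun a _ => mul_nonneg (hpos b a) (sq_nonneg _))).1 (hterm b (Finset.mem_univ b))
    exact this a (Finset.mem_univ a)
  rcases mul_eq_zero.1 hterm2 with h | h
  · exact absurd h hba
  · have := sq_eq_zero_iff.1 h
    linarith [this]

end Helpers
section Refine
open Finset

variable [Fintype σ] {A B : Type} [Fintype A] [Fintype B]

lemma iterDeg_succ_inl (AA : Struct σ ar A) (k : ℕ) (a : A) :
    iterDeg AA (k+1) (Sum.inl a)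
      = Multiset.map (fun c : Cons AA => (lab AA a c, iterDeg AA k (Sum.inr c)))
          Finset.univ.val := rfl

lemma iterDeg_succ_inr (AA : Struct σ ar A) (k : ℕ) (c : Cons AA) :
    iterDeg AA (k+1) (Sum.inr c)
      = Multiset.map (fun a : A => (lab AA a c, iterDeg AA k (Sum.inl a)))
          Finset.univ.val := rfl

lemma refineStep (AA : Struct σ ar A) (BB : Struct σ ar B)
    (hA : Fintype.card A = Fintype.card B)
    (hC : Fintype.card (Cons AA) = Fintype.card (Cons BB)) :
    ∀ (k : ℕ) (x : A ⊕ Cons AA) (y : B ⊕ Cons BB),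
      iterDeg AA (k+1) x = iterDeg BB (k+1) y → iterDeg AA k x = iterDeg BB k y := by
  intro k
  induction k with
  | zero =>
    rintro (a | c) (b | d) h
    · rfl
    · exfalso
      obtain ⟨e, hp⟩ := mapEq_equiv (h : Multiset.map _ Finset.univ.val = Multiset.map _ _)
      rcases isEmpty_or_nonempty (Cons AA) with hE | ⟨⟨c⟩⟩
      · have : IsEmpty B := e.symm.isEmpty
        have : Fintype.card A = 0 := by rw [hA]; exact Fintype.card_eq_zero
        exact (Fintype.card_eq_zero_iff.1 this).false a
      · have := congrArg Prod.snd (hp c)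
        simp [iterDeg] at this
    · exfalso
      obtain ⟨e, hp⟩ := mapEq_equiv (h : Multiset.map _ Finset.univ.val = Multiset.map _ _)
      rcases isEmpty_or_nonempty A with hE | ⟨⟨a⟩⟩
      · have : Fintype.card B = 0 := by rw [← hA]; exact Fintype.card_eq_zero
        exact (Fintype.card_eq_zero_iff.1 this).false b
      · have := congrArg Prod.snd (hp a)
        simp [iterDeg] at this
    · rfl
  | succ k ih =>
    rintro (a | c) (b | d) h
    · obtain ⟨e, hp⟩ := mapEq_equiv (h : Multiset.map _ Finset.univ.val = Multiset.map _ _)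
      show Multiset.map (fun c : Cons AA => (lab AA a c, iterDeg AA k (Sum.inr c)))
          Finset.univ.val = Multiset.map (fun d : Cons BB => (lab BB b d, iterDeg BB k (Sum.inr d)))
          Finset.univ.val
      rw [← map_univ_reindex e (fun d : Cons BB => (lab BB b d, iterDeg BB k (Sum.inr d)))]
      apply Multiset.map_congr rfl
      intro c _
      have h1 := congrArg Prod.fst (hp c)
      have h2 := congrArg Prod.snd (hp c)
      simp only at h1 h2
      exact Prod.ext h1 (ih _ _ h2)
    · obtain ⟨e, hp⟩ := mapEq_equiv (h : Multiset.map _ Finset.univ.val = Multiset.map _ _)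
      show Multiset.map (fun c : Cons AA => (lab AA a c, iterDeg AA k (Sum.inr c)))
          Finset.univ.val = Multiset.map (fun b : B => (lab BB b d, iterDeg BB k (Sum.inl b)))
          Finset.univ.val
      rw [← map_univ_reindex e (fun b : B => (lab BB b d, iterDeg BB k (Sum.inl b)))]
      apply Multiset.map_congr rfl
      intro c _
      have h1 := congrArg Prod.fst (hp c)
      have h2 := congrArg Prod.snd (hp c)
      simp only at h1 h2
      exact Prod.ext h1 (ih _ _ h2)
    · obtain ⟨e, hp⟩ := mapEq_equiv (h : Multiset.map _ Finset.univ.val = Multiset.map _ _)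
      show Multiset.map (fun a : A => (lab AA a c, iterDeg AA k (Sum.inl a)))
          Finset.univ.val = Multiset.map (fun d : Cons BB => (lab BB b d, iterDeg BB k (Sum.inr d)))
          Finset.univ.val
      rw [← map_univ_reindex e (fun d : Cons BB => (lab BB b d, iterDeg BB k (Sum.inr d)))]
      apply Multiset.map_congr rfl
      intro a _
      have h1 := congrArg Prod.fst (hp a)
      have h2 := congrArg Prod.snd (hp a)
      simp only at h1 h2
      exact Prod.ext h1 (ih _ _ h2)
    · obtain ⟨e, hp⟩ := mapEq_equiv (h : Multiset.map _ Finset.univ.val = Multiset.map _ _)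
      show Multiset.map (fun a : A => (lab AA a c, iterDeg AA k (Sum.inl a)))
          Finset.univ.val = Multiset.map (fun a' : B => (lab BB a' d, iterDeg BB k (Sum.inl a')))
          Finset.univ.val
      rw [← map_univ_reindex e (fun a' : B => (lab BB a' d, iterDeg BB k (Sum.inl a')))]
      apply Multiset.map_congr rfl
      intro a _
      have h1 := congrArg Prod.fst (hp a)
      have h2 := congrArg Prod.snd (hp a)
      simp only at h1 h2
      exact Prod.ext h1 (ih _ _ h2)

lemma refineLe (AA : Struct σ ar A) (BB : Struct σ ar B)
    (hA : Fintype.card A = Fintype.card B)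
    (hC : Fintype.card (Cons AA) = Fintype.card (Cons BB)) :
    ∀ (k : ℕ) (x : A ⊕ Cons AA) (y : B ⊕ Cons BB),
      iterDeg AA k x = iterDeg BB k y → ∀ j ≤ k, iterDeg AA j x = iterDeg BB j y := by
  intro k
  induction k with
  | zero => intro x y h j hj; rw [Nat.le_zero.1 hj]; exact h
  | succ k ih =>
    intro x y h j hj
    rcases Nat.eq_or_lt_of_le hj with rfl | hlt
    · exact h
    · exact ih x y (refineStep AA BB hA hC k x y h) j (Nat.lt_succ_iff.1 hlt)

/-- Elements and constraints never share an iterated degree. -/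
lemma no_mix (AA : Struct σ ar A) (BB : Struct σ ar B)
    (hA : Fintype.card A = Fintype.card B)
    (hC : Fintype.card (Cons AA) = Fintype.card (Cons BB))
    (k : ℕ) (a : A) (d : Cons BB) :
    iterDeg AA k (Sum.inl a) ≠ iterDeg BB k (Sum.inr d) := by
  intro h
  have h0 := refineLe AA BB hA hC k _ _ h 0 (Nat.zero_le _)
  simp [iterDeg] at h0

end Refine
section Forward
open Finset

lemma stoch_ind_row {α β T : Type} [Fintype α] [Fintype β] (X : Matrix β α ℝ)
    (hrow : ∀ b, ∑ a, X b a = 1) {f : α → T} {g : β → T}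
    (hgood : ∀ b a, X b a ≠ 0 → f a = g b) (b : β) (v : T) :
    ∑ a, X b a * (if f a = v then 1 else 0) = if g b = v then 1 else 0 := by
  have h : ∀ a, X b a * (if f a = v then 1 else 0) = X b a * (if g b = v then 1 else 0) := by
    intro a
    by_cases h : X b a = 0
    · rw [h]; ring
    · rw [hgood b a h]
  rw [Finset.sum_congr rfl (fun a _ => h a), ← Finset.sum_mul, hrow b, one_mul]

lemma stoch_ind_col {α β T : Type} [Fintype α] [Fintype β] (X : Matrix β α ℝ)
    (hcol : ∀ a, ∑ b, X b a = 1) {f : α → T} {g : β → T}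
    (hgood : ∀ b a, X b a ≠ 0 → f a = g b) (a : α) (v : T) :
    ∑ b, X b a * (if g b = v then 1 else 0) = if f a = v then 1 else 0 := by
  have h : ∀ b, X b a * (if g b = v then 1 else 0) = X b a * (if f a = v then 1 else 0) := by
    intro b
    by_cases h : X b a = 0
    · rw [h]; ring
    · rw [hgood b a h]
  rw [Finset.sum_congr rfl (fun b _ => h b), ← Finset.sum_mul, hcol a, one_mul]

lemma cross_sum {P Q R S : Type} [Fintype P] [Fintype Q] [Fintype R] [Fintype S]
    (X : Matrix Q P ℝ) (M1 : Matrix P R ℝ) (M2 : Matrix Q S ℝ) (Y : Matrix S R ℝ)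
    (heq : ∀ q r, ∑ p, X q p * M1 p r = ∑ s, M2 q s * Y s r)
    (χ : R → ℝ) (ψ : S → ℝ) (hY : ∀ s, ∑ r, Y s r * χ r = ψ s) (q : Q) :
    ∑ p, X q p * (∑ r, M1 p r * χ r) = ∑ s, M2 q s * ψ s := by
  calc ∑ p, X q p * (∑ r, M1 p r * χ r) = ∑ p, ∑ r, X q p * M1 p r * χ r := by
        apply Finset.sum_congr rfl; intro p _
        rw [Finset.mul_sum]; apply Finset.sum_congr rfl; intro r _; ring
    _ = ∑ r, (∑ p, X q p * M1 p r) * χ r := by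
        rw [Finset.sum_comm]
        apply Finset.sum_congr rfl; intro r _; rw [Finset.sum_mul]
    _ = ∑ r, (∑ s, M2 q s * Y s r) * χ r := by
        apply Finset.sum_congr rfl; intro r _; rw [heq q r]
    _ = ∑ s, ∑ r, M2 q s * Y s r * χ r := by
        rw [Finset.sum_comm]
        apply Finset.sum_congr rfl; intro r _; rw [Finset.sum_mul]
    _ = ∑ s, M2 q s * ψ s := by
        apply Finset.sum_congr rfl; intro s _
        rw [← hY s, Finset.mul_sum]
        apply Finset.sum_congr rfl; intro r _; ring

variable [Fintype σ] {A B : Type} [Fintype A] [Fintype B]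
  {AA : Struct σ ar A} {BB : Struct σ ar B}

lemma sum_labMat_ind (AA : Struct σ ar A) (ℓ : Label σ ar) (k : ℕ) (v : DegT (Label σ ar) k)
    (a : A) :
    ∑ c, labMat AA ℓ a c * (if iterDeg AA k (Sum.inr c) = v then 1 else 0)
      = (Nat.card {c : Cons AA //
          lab AA a c = ℓ ∧ iterDeg AA k (Sum.inr c) = v} : ℝ) := by
  rw [ncard_eq_filter, ← Finset.sum_boole]
  apply Finset.sum_congr rfl
  intro c _
  by_cases h1 : lab AA a c = ℓ <;> by_cases h2 : iterDeg AA k (Sum.inr c) = v <;>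
    simp [labMat, h1, h2]

lemma sum_labMat_ind' (AA : Struct σ ar A) (ℓ : Label σ ar) (k : ℕ) (v : DegT (Label σ ar) k)
    (c : Cons AA) :
    ∑ a, labMat AA ℓ a c * (if iterDeg AA k (Sum.inl a) = v then 1 else 0)
      = (Nat.card {a : A //
          lab AA a c = ℓ ∧ iterDeg AA k (Sum.inl a) = v} : ℝ) := by
  rw [ncard_eq_filter, ← Finset.sum_boole]
  apply Finset.sum_congr rfl
  intro a _
  by_cases h1 : lab AA a c = ℓ <;> by_cases h2 : iterDeg AA k (Sum.inl a) = v <;>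
    simp [labMat, h1, h2]

lemma frac_good (X : Matrix B A ℝ) (Y : Matrix (Cons BB) (Cons AA) ℝ)
    (hX : IsDoublyStochastic X) (hY : IsDoublyStochastic Y)
    (heq : ∀ ℓ : Label σ ar,
      X * labMat AA ℓ = labMat BB ℓ * Y ∧
      labMat AA ℓ * Y.transpose = X.transpose * labMat BB ℓ) :
    ∀ k : ℕ,
      (∀ (b : B) (a : A), X b a ≠ 0 → iterDeg AA k (Sum.inl a) = iterDeg BB k (Sum.inl b)) ∧
      (∀ (d : Cons BB) (c : Cons AA), Y d c ≠ 0 →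
        iterDeg AA k (Sum.inr c) = iterDeg BB k (Sum.inr d)) := by
  obtain ⟨hXpos, hXrow, hXcol⟩ := hX
  obtain ⟨hYpos, hYrow, hYcol⟩ := hY
  have heq1 : ∀ (ℓ : Label σ ar) (b : B) (c : Cons AA),
      ∑ a, X b a * labMat AA ℓ a c = ∑ d, labMat BB ℓ b d * Y d c := by
    intro ℓ b c
    have h := congrFun (congrFun (heq ℓ).1 b) c
    rwa [Matrix.mul_apply, Matrix.mul_apply] at h
  have heq2 : ∀ (ℓ : Label σ ar) (a : A) (d : Cons BB),
      ∑ c, labMat AA ℓ a c * Y d c = ∑ b, X b a * labMat BB ℓ b d := by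
    intro ℓ a d
    have h := congrFun (congrFun (heq ℓ).2 a) d
    rw [Matrix.mul_apply, Matrix.mul_apply] at h
    exact h
  intro k
  induction k with
  | zero =>
    constructor
    · intro b a _; rfl
    · intro d c _; rfl
  | succ k ih =>
    obtain ⟨ihX, ihY⟩ := ih
    have keyA : ∀ (ℓ : Label σ ar) (v : DegT (Label σ ar) k) (b' : B) (a' : A), X b' a' ≠ 0 →
        ((Nat.card {c : Cons AA //
          lab AA a' c = ℓ ∧ iterDeg AA k (Sum.inr c) = v}) : ℝ)
        = ((Nat.card {d : Cons BB //
          lab BB b' d = ℓ ∧ iterDeg BB k (Sum.inr d) = v}) : ℝ) := by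
      intro ℓ v
      apply ds_transfer X hXpos hXrow hXcol
      · intro b'
        rw [← sum_labMat_ind BB ℓ k v b']
        have h := cross_sum X (labMat AA ℓ) (labMat BB ℓ) Y (heq1 ℓ)
          (fun c => if iterDeg AA k (Sum.inr c) = v then 1 else 0)
          (fun d => if iterDeg BB k (Sum.inr d) = v then 1 else 0)
          (fun d => stoch_ind_row Y hYrow (fun d c hy => ihY d c hy) d v) b'
        rw [← h]
        apply Finset.sum_congr rfl
        intro a' _
        rw [sum_labMat_ind AA ℓ k v a']
      · intro a'
        rw [← sum_labMat_ind AA ℓ k v a']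
        have h := cross_sum (fun (a'' : A) (b' : B) => X b' a'')
          (fun (b' : B) (d : Cons BB) => labMat BB ℓ b' d)
          (fun (a'' : A) (c : Cons AA) => labMat AA ℓ a'' c)
          (fun (c : Cons AA) (d : Cons BB) => Y d c)
          (fun a'' d => (heq2 ℓ a'' d).symm)
          (fun d => if iterDeg BB k (Sum.inr d) = v then 1 else 0)
          (fun c => if iterDeg AA k (Sum.inr c) = v then 1 else 0)
          (fun c => stoch_ind_col Y hYcol (fun d c' hy => ihY d c' hy) c v) a'
        rw [← h]
        apply Finset.sum_congr rfl
        intro b' _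
        rw [sum_labMat_ind BB ℓ k v b']
    have keyC : ∀ (ℓ : Label σ ar) (v : DegT (Label σ ar) k) (d' : Cons BB) (c' : Cons AA),
        Y d' c' ≠ 0 →
        ((Nat.card {a : A //
          lab AA a c' = ℓ ∧ iterDeg AA k (Sum.inl a) = v}) : ℝ)
        = ((Nat.card {b : B //
          lab BB b d' = ℓ ∧ iterDeg BB k (Sum.inl b) = v}) : ℝ) := by
      intro ℓ v
      apply ds_transfer Y hYpos hYrow hYcol
      · intro d'
        rw [← sum_labMat_ind' BB ℓ k v d']
        have h := cross_sum Y (fun (c'' : Cons AA) (a : A) => labMat AA ℓ a c'')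
          (fun (d'' : Cons BB) (b : B) => labMat BB ℓ b d'')
          (fun (b : B) (a : A) => X b a)
          (fun d'' a => by
            rw [show (∑ c'', Y d'' c'' * labMat AA ℓ a c'')
              = ∑ c'', labMat AA ℓ a c'' * Y d'' c'' from
              Finset.sum_congr rfl (fun c'' _ => mul_comm _ _), heq2 ℓ a d'']
            apply Finset.sum_congr rfl; intro b _; ring)
          (fun a => if iterDeg AA k (Sum.inl a) = v then 1 else 0)
          (fun b => if iterDeg BB k (Sum.inl b) = v then 1 else 0)
          (fun b => stoch_ind_row X hXrow (fun b a hx => ihX b a hx) b v) d'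
        rw [← h]
        apply Finset.sum_congr rfl
        intro c'' _
        rw [sum_labMat_ind' AA ℓ k v c'']
      · intro c''
        rw [← sum_labMat_ind' AA ℓ k v c'']
        have h := cross_sum (fun (c3 : Cons AA) (d' : Cons BB) => Y d' c3)
          (fun (d' : Cons BB) (b : B) => labMat BB ℓ b d')
          (fun (c3 : Cons AA) (a : A) => labMat AA ℓ a c3)
          (fun (a : A) (b : B) => X b a)
          (fun c3 b => by
            rw [show (∑ d', Y d' c3 * labMat BB ℓ b d')
              = ∑ d', labMat BB ℓ b d' * Y d' c3 from
              Finset.sum_congr rfl (fun d' _ => mul_comm _ _), ← heq1 ℓ b c3]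
            apply Finset.sum_congr rfl; intro a _; ring)
          (fun b => if iterDeg BB k (Sum.inl b) = v then 1 else 0)
          (fun a => if iterDeg AA k (Sum.inl a) = v then 1 else 0)
          (fun a => stoch_ind_col X hXcol (fun b a' hx => ihX b a' hx) a v) c''
        rw [← h]
        apply Finset.sum_congr rfl
        intro d' _
        rw [sum_labMat_ind' BB ℓ k v d']
    constructor
    · intro b a hba
      rw [iterDeg_succ_inl, iterDeg_succ_inl]
      apply mapEq_of_counts
      rintro ⟨ℓ, v⟩
      show Nat.card {c : Cons AA // (lab AA a c, iterDeg AA k (Sum.inr c)) = (ℓ, v)}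
        = Nat.card {d : Cons BB // (lab BB b d, iterDeg BB k (Sum.inr d)) = (ℓ, v)}
      rw [ncard_pair (fun c => lab AA a c) (fun c => iterDeg AA k (Sum.inr c)) ℓ v,
        ncard_pair (fun d => lab BB b d) (fun d => iterDeg BB k (Sum.inr d)) ℓ v]
      exact_mod_cast keyA ℓ v b a hba
    · intro d c hdc
      rw [iterDeg_succ_inr, iterDeg_succ_inr]
      apply mapEq_of_counts
      rintro ⟨ℓ, v⟩
      show Nat.card {a : A // (lab AA a c, iterDeg AA k (Sum.inl a)) = (ℓ, v)}
        = Nat.card {b : B // (lab BB b d, iterDeg BB k (Sum.inl b)) = (ℓ, v)}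
      rw [ncard_pair (fun a => lab AA a c) (fun a => iterDeg AA k (Sum.inl a)) ℓ v,
        ncard_pair (fun b => lab BB b d) (fun b => iterDeg BB k (Sum.inl b)) ℓ v]
      exact_mod_cast keyC ℓ v d c hdc

/-- Forward direction of the theorem. -/
lemma fracIso_to_sameIterDeg (h : FracIso AA BB) : SameIterDeg AA BB := by
  obtain ⟨X, Y, hX, hY, heq⟩ := h
  have good := frac_good X Y hX hY heq
  intro k
  apply mapEq_of_counts
  intro v
  rw [ncard_sum, ncard_sum]
  have hA : ((Finset.univ.filter fun a : A => iterDeg AA k (Sum.inl a) = v).card : ℝ)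
      = ((Finset.univ.filter fun b : B => iterDeg BB k (Sum.inl b) = v).card : ℝ) := by
    rw [← Finset.sum_boole, ← Finset.sum_boole]
    calc (∑ a, if iterDeg AA k (Sum.inl a) = v then (1:ℝ) else 0)
        = ∑ a, (∑ b, X b a) * (if iterDeg AA k (Sum.inl a) = v then (1:ℝ) else 0) := by
          apply Finset.sum_congr rfl; intro a _; rw [hX.2.2 a, one_mul]
      _ = ∑ b, ∑ a, X b a * (if iterDeg AA k (Sum.inl a) = v then (1:ℝ) else 0) := by
          rw [Finset.sum_comm]
          apply Finset.sum_congr rfl; intro a _; rw [Finset.sum_mul]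
      _ = ∑ b, (if iterDeg BB k (Sum.inl b) = v then (1:ℝ) else 0) := by
          apply Finset.sum_congr rfl; intro b _
          exact stoch_ind_row X hX.2.1 (fun b' a' hx => (good k).1 b' a' hx) b v
  have hc : ((Finset.univ.filter fun c : Cons AA => iterDeg AA k (Sum.inr c) = v).card : ℝ)
      = ((Finset.univ.filter fun d : Cons BB => iterDeg BB k (Sum.inr d) = v).card : ℝ) := by
    rw [← Finset.sum_boole, ← Finset.sum_boole]
    calc (∑ c, if iterDeg AA k (Sum.inr c) = v then (1:ℝ) else 0)
        = ∑ c, (∑ d, Y d c) * (if iterDeg AA k (Sum.inr c) = v then (1:ℝ) else 0) := by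
          apply Finset.sum_congr rfl; intro c _; rw [hY.2.2 c, one_mul]
      _ = ∑ d, ∑ c, Y d c * (if iterDeg AA k (Sum.inr c) = v then (1:ℝ) else 0) := by
          rw [Finset.sum_comm]
          apply Finset.sum_congr rfl; intro c _; rw [Finset.sum_mul]
      _ = ∑ d, (if iterDeg BB k (Sum.inr d) = v then (1:ℝ) else 0) := by
          apply Finset.sum_congr rfl; intro d _
          exact stoch_ind_row Y hY.2.1 (fun d' c' hy => (good k).2 d' c' hy) d v
  have hA' : Nat.card {a : A // iterDeg AA k (Sum.inl a) = v}
      = Nat.card {b : B // iterDeg BB k (Sum.inl b) = v} := by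
    rw [ncard_eq_filter, ncard_eq_filter]; exact_mod_cast hA
  have hc' : Nat.card {c : Cons AA // iterDeg AA k (Sum.inr c) = v}
      = Nat.card {d : Cons BB // iterDeg BB k (Sum.inr d) = v} := by
    rw [ncard_eq_filter, ncard_eq_filter]; exact_mod_cast hc
  rw [hA', hc']

end Forward
section BackwardAux
open Finset

instance degT_inhabited {L : Type} : ∀ k, Inhabited (DegT L k)
  | 0 => ⟨true⟩
  | _+1 => ⟨(0 : Multiset _)⟩

lemma sum_ite_const {Z : Type} [Fintype Z] (p : Z → Prop) (r : ℝ) :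
    (∑ z, if p z then r else 0) = (Nat.card {z // p z} : ℝ) * r := by
  rw [ncard_eq_filter]
  have h : ∀ z, (if p z then r else 0) = (if p z then (1:ℝ) else 0) * r := by
    intro z; by_cases hp : p z <;> simp [hp]
  rw [Finset.sum_congr rfl (fun z _ => h z), ← Finset.sum_mul, Finset.sum_boole]

lemma pair_count_transfer {L W Z₁ Z₂ : Type} [Fintype Z₁] [Fintype Z₂]
    {f₁ : Z₁ → L} {g₁ : Z₁ → W} {f₂ : Z₂ → L} {g₂ : Z₂ → W}
    (h : Multiset.map (fun z => (f₁ z, g₁ z)) Finset.univ.val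
      = Multiset.map (fun z => (f₂ z, g₂ z)) Finset.univ.val) (ℓ : L) (v : W) :
    Nat.card {z // f₁ z = ℓ ∧ g₁ z = v} = Nat.card {z // f₂ z = ℓ ∧ g₂ z = v} := by
  obtain ⟨e, hp⟩ := mapEq_equiv h
  refine Nat.card_congr (e.subtypeEquiv fun z => ?_)
  have h1 := congrArg Prod.fst (hp z)
  have h2 := congrArg Prod.snd (hp z)
  simp only at h1 h2
  rw [h1, h2]

variable [Fintype σ] {A B : Type} [Fintype A] [Fintype B]

lemma core_ratio (AA : Struct σ ar A) (BB : Struct σ ar B) (k₀ : ℕ)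
    (stabCC : ∀ c c' : Cons AA,
      iterDeg AA k₀ (Sum.inr c) = iterDeg AA k₀ (Sum.inr c') →
      iterDeg AA (k₀+1) (Sum.inr c) = iterDeg AA (k₀+1) (Sum.inr c'))
    (stabAB : ∀ (a : A) (b : B),
      iterDeg AA k₀ (Sum.inl a) = iterDeg BB k₀ (Sum.inl b) →
      iterDeg AA (k₀+1) (Sum.inl a) = iterDeg BB (k₀+1) (Sum.inl b))
    (hnA : ∀ v, Nat.card {a : A // iterDeg AA k₀ (Sum.inl a) = v}
      = Nat.card {b : B // iterDeg BB k₀ (Sum.inl b) = v})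
    (b : B) (c : Cons AA) (ℓ : Label σ ar) :
    (Nat.card {a : A // lab AA a c = ℓ
        ∧ iterDeg AA k₀ (Sum.inl a) = iterDeg BB k₀ (Sum.inl b)} : ℝ)
      / (Nat.card {a : A // iterDeg AA k₀ (Sum.inl a) = iterDeg BB k₀ (Sum.inl b)} : ℝ)
    = (Nat.card {d : Cons BB // lab BB b d = ℓ
        ∧ iterDeg BB k₀ (Sum.inr d) = iterDeg AA k₀ (Sum.inr c)} : ℝ)
      / (Nat.card {c' : Cons AA // iterDeg AA k₀ (Sum.inr c') = iterDeg AA k₀ (Sum.inr c)} : ℝ) := by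
  set β := iterDeg BB k₀ (Sum.inl b) with hβ
  set γ := iterDeg AA k₀ (Sum.inr c) with hγ
  set n := Nat.card {a : A // lab AA a c = ℓ ∧ iterDeg AA k₀ (Sum.inl a) = β} with hn
  set m := Nat.card {d : Cons BB // lab BB b d = ℓ ∧ iterDeg BB k₀ (Sum.inr d) = γ} with hm
  set nAβ := Nat.card {a : A // iterDeg AA k₀ (Sum.inl a) = β} with hnAβ
  set nCγ := Nat.card {c' : Cons AA // iterDeg AA k₀ (Sum.inr c') = γ} with hnCγ
  have hβpos : 0 < nAβ := by
    rw [hnAβ, hnA β]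
    have : Nonempty {b' : B // iterDeg BB k₀ (Sum.inl b') = β} := ⟨⟨b, rfl⟩⟩
    exact Nat.card_pos
  have hγpos : 0 < nCγ := by
    have : Nonempty {c' : Cons AA // iterDeg AA k₀ (Sum.inr c') = γ} := ⟨⟨c, rfl⟩⟩
    exact Nat.card_pos
  -- row constancy (cross structure)
  have rowconst : ∀ a : A, iterDeg AA k₀ (Sum.inl a) = β →
      Nat.card {c' : Cons AA // lab AA a c' = ℓ ∧ iterDeg AA k₀ (Sum.inr c') = γ} = m := by
    intro a ha
    exact pair_count_transfer
      (stabAB a b ha : Multiset.map _ Finset.univ.val = Multiset.map _ Finset.univ.val) ℓ γ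
  -- column constancy (within first structure)
  have colconst : ∀ c' : Cons AA, iterDeg AA k₀ (Sum.inr c') = γ →
      Nat.card {a : A // lab AA a c' = ℓ ∧ iterDeg AA k₀ (Sum.inl a) = β} = n := by
    intro c' hc'
    exact pair_count_transfer
      (stabCC c' c (by rw [hc']) :
        Multiset.map _ Finset.univ.val = Multiset.map _ Finset.univ.val) ℓ β
  -- double counting
  have hT : (nCγ : ℝ) * n = (nAβ : ℝ) * m := by
    have e1 : ∑ c' : Cons AA, (if iterDeg AA k₀ (Sum.inr c') = γ then (1:ℝ) else 0)
          * (∑ a : A, labMat AA ℓ a c'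
              * (if iterDeg AA k₀ (Sum.inl a) = β then (1:ℝ) else 0))
        = (nCγ : ℝ) * n := by
      calc ∑ c' : Cons AA, (if iterDeg AA k₀ (Sum.inr c') = γ then (1:ℝ) else 0)
            * (∑ a : A, labMat AA ℓ a c'
                * (if iterDeg AA k₀ (Sum.inl a) = β then (1:ℝ) else 0))
          = ∑ c' : Cons AA, (if iterDeg AA k₀ (Sum.inr c') = γ then (n:ℝ) else 0) := by
            apply Finset.sum_congr rfl
            intro c' _
            by_cases hc' : iterDeg AA k₀ (Sum.inr c') = γ
            · rw [if_pos hc', if_pos hc', one_mul, sum_labMat_ind' AA ℓ k₀ β c',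
                colconst c' hc']
            · rw [if_neg hc', if_neg hc', zero_mul]
        _ = (nCγ : ℝ) * n := by rw [sum_ite_const]
    have e2 : ∑ c' : Cons AA, (if iterDeg AA k₀ (Sum.inr c') = γ then (1:ℝ) else 0)
          * (∑ a : A, labMat AA ℓ a c'
              * (if iterDeg AA k₀ (Sum.inl a) = β then (1:ℝ) else 0))
        = (nAβ : ℝ) * m := by
      calc ∑ c' : Cons AA, (if iterDeg AA k₀ (Sum.inr c') = γ then (1:ℝ) else 0)
            * (∑ a : A, labMat AA ℓ a c'
                * (if iterDeg AA k₀ (Sum.inl a) = β then (1:ℝ) else 0))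
          = ∑ c' : Cons AA, ∑ a : A, (if iterDeg AA k₀ (Sum.inl a) = β then (1:ℝ) else 0)
              * (labMat AA ℓ a c' * (if iterDeg AA k₀ (Sum.inr c') = γ then (1:ℝ) else 0)) := by
            apply Finset.sum_congr rfl; intro c' _
            rw [Finset.mul_sum]
            apply Finset.sum_congr rfl; intro a _; ring
        _ = ∑ a : A, ∑ c' : Cons AA, (if iterDeg AA k₀ (Sum.inl a) = β then (1:ℝ) else 0)
              * (labMat AA ℓ a c' * (if iterDeg AA k₀ (Sum.inr c') = γ then (1:ℝ) else 0)) :=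
            Finset.sum_comm
        _ = ∑ a : A, (if iterDeg AA k₀ (Sum.inl a) = β then (m:ℝ) else 0) := by
            apply Finset.sum_congr rfl
            intro a _
            rw [← Finset.mul_sum]
            by_cases ha : iterDeg AA k₀ (Sum.inl a) = β
            · rw [if_pos ha, if_pos ha, one_mul, sum_labMat_ind AA ℓ k₀ γ a, rowconst a ha]
            · rw [if_neg ha, if_neg ha, zero_mul]
        _ = (nAβ : ℝ) * m := by rw [sum_ite_const]
    rw [← e1, e2]
  have hnAβ0 : (nAβ : ℝ) ≠ 0 := Nat.cast_ne_zero.2 hβpos.ne'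
  have hnCγ0 : (nCγ : ℝ) ≠ 0 := Nat.cast_ne_zero.2 hγpos.ne'
  rw [div_eq_div_iff hnAβ0 hnCγ0]
  nlinarith [hT]

end BackwardAux
section BackwardMain
open Finset

variable [Fintype σ] {A B : Type} [Fintype A] [Fintype B]

lemma sameIterDeg_to_fracIso {AA : Struct σ ar A} {BB : Struct σ ar B}
    (h : SameIterDeg AA BB) : FracIso AA BB := by
  have hcards : ∀ (k : ℕ) (v : DegT (Label σ ar) k),
      Nat.card {x : A ⊕ Cons AA // iterDeg AA k x = v}
      = Nat.card {y : B ⊕ Cons BB // iterDeg BB k y = v} := by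
    intro k v
    obtain ⟨e, hp⟩ := mapEq_equiv (h k)
    exact ncard_equiv e hp v
  have hsplit : ∀ (k : ℕ) (v : DegT (Label σ ar) k),
      Nat.card {a : A // iterDeg AA k (Sum.inl a) = v}
        + Nat.card {c : Cons AA // iterDeg AA k (Sum.inr c) = v}
      = Nat.card {b : B // iterDeg BB k (Sum.inl b) = v}
        + Nat.card {d : Cons BB // iterDeg BB k (Sum.inr d) = v} := by
    intro k v
    have h0 := hcards k v
    rwa [ncard_sum, ncard_sum] at h0
  -- cardinalities at level 0
  have hAB : Fintype.card A = Fintype.card B := by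
    have h0 := hsplit 0 (show DegT (Label σ ar) 0 from true)
    have evA : Nat.card {a : A //
        iterDeg AA 0 (Sum.inl a) = (show DegT (Label σ ar) 0 from true)} = Fintype.card A := by
      rw [← Nat.card_eq_fintype_card]
      exact Nat.card_congr (Equiv.subtypeUnivEquiv (fun a => rfl))
    have evB : Nat.card {b : B //
        iterDeg BB 0 (Sum.inl b) = (show DegT (Label σ ar) 0 from true)} = Fintype.card B := by
      rw [← Nat.card_eq_fintype_card]
      exact Nat.card_congr (Equiv.subtypeUnivEquiv (fun b => rfl))
    have evC : Nat.card {c : Cons AA //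
        iterDeg AA 0 (Sum.inr c) = (show DegT (Label σ ar) 0 from true)} = 0 := by
      have hE : IsEmpty {c : Cons AA //
          iterDeg AA 0 (Sum.inr c) = (show DegT (Label σ ar) 0 from true)} :=
        ⟨fun ⟨c, hc⟩ => by simp [iterDeg] at hc⟩
      exact Nat.card_of_isEmpty
    have evD : Nat.card {d : Cons BB //
        iterDeg BB 0 (Sum.inr d) = (show DegT (Label σ ar) 0 from true)} = 0 := by
      have hE : IsEmpty {d : Cons BB //
          iterDeg BB 0 (Sum.inr d) = (show DegT (Label σ ar) 0 from true)} :=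
        ⟨fun ⟨d, hd⟩ => by simp [iterDeg] at hd⟩
      exact Nat.card_of_isEmpty
    rw [evA, evB, evC, evD] at h0
    omega
  have hCD : Fintype.card (Cons AA) = Fintype.card (Cons BB) := by
    have h0 := hsplit 0 (show DegT (Label σ ar) 0 from false)
    have evA : Nat.card {a : A //
        iterDeg AA 0 (Sum.inl a) = (show DegT (Label σ ar) 0 from false)} = 0 := by
      have hE : IsEmpty {a : A //
          iterDeg AA 0 (Sum.inl a) = (show DegT (Label σ ar) 0 from false)} :=
        ⟨fun ⟨a, ha⟩ => by simp [iterDeg] at ha⟩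
      exact Nat.card_of_isEmpty
    have evB : Nat.card {b : B //
        iterDeg BB 0 (Sum.inl b) = (show DegT (Label σ ar) 0 from false)} = 0 := by
      have hE : IsEmpty {b : B //
          iterDeg BB 0 (Sum.inl b) = (show DegT (Label σ ar) 0 from false)} :=
        ⟨fun ⟨b, hb⟩ => by simp [iterDeg] at hb⟩
      exact Nat.card_of_isEmpty
    have evC : Nat.card {c : Cons AA //
        iterDeg AA 0 (Sum.inr c) = (show DegT (Label σ ar) 0 from false)}
        = Fintype.card (Cons AA) := by
      rw [← Nat.card_eq_fintype_card]
      exact Nat.card_congr (Equiv.subtypeUnivEquiv (fun c => rfl))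
    have evD : Nat.card {d : Cons BB //
        iterDeg BB 0 (Sum.inr d) = (show DegT (Label σ ar) 0 from false)}
        = Fintype.card (Cons BB) := by
      rw [← Nat.card_eq_fintype_card]
      exact Nat.card_congr (Equiv.subtypeUnivEquiv (fun d => rfl))
    rw [evA, evB, evC, evD] at h0
    omega
  -- no mixing
  have mix1 : ∀ (k : ℕ) (a : A) (c : Cons AA),
      iterDeg AA k (Sum.inl a) = iterDeg AA k (Sum.inr c) → False :=
    fun k a c hk => no_mix AA AA rfl rfl k a c hk
  have mix2 : ∀ (k : ℕ) (b : B) (d : Cons BB),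
      iterDeg BB k (Sum.inl b) = iterDeg BB k (Sum.inr d) → False :=
    fun k b d hk => no_mix BB BB rfl rfl k b d hk
  have mix3 : ∀ (k : ℕ) (a : A) (d : Cons BB),
      iterDeg AA k (Sum.inl a) = iterDeg BB k (Sum.inr d) → False :=
    fun k a d hk => no_mix AA BB hAB hCD k a d hk
  have mix4 : ∀ (k : ℕ) (b : B) (c : Cons AA),
      iterDeg BB k (Sum.inl b) = iterDeg AA k (Sum.inr c) → False :=
    fun k b c hk => no_mix BB AA hAB.symm hCD.symm k b c hk
  -- split count equalities
  have hnA : ∀ (k : ℕ) (v : DegT (Label σ ar) k),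
      Nat.card {a : A // iterDeg AA k (Sum.inl a) = v}
      = Nat.card {b : B // iterDeg BB k (Sum.inl b) = v} := by
    intro k v
    rcases Nat.eq_zero_or_pos (Nat.card {a : A // iterDeg AA k (Sum.inl a) = v}) with h0 | hpos
    · rcases Nat.eq_zero_or_pos (Nat.card {b : B // iterDeg BB k (Sum.inl b) = v}) with h0' | hpos'
      · rw [h0, h0']
      · exfalso
        obtain ⟨b, hb⟩ := (Nat.card_pos_iff.1 hpos').1
        have hC0 : Nat.card {c : Cons AA // iterDeg AA k (Sum.inr c) = v} = 0 := by
          have hE : IsEmpty {c : Cons AA // iterDeg AA k (Sum.inr c) = v} :=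
            ⟨fun ⟨c, hc⟩ => mix4 k b c (by rw [hb, hc])⟩
          exact Nat.card_of_isEmpty
        have heq := hsplit k v
        rw [h0, hC0] at heq
        omega
    · obtain ⟨a, ha⟩ := (Nat.card_pos_iff.1 hpos).1
      have hC0 : Nat.card {c : Cons AA // iterDeg AA k (Sum.inr c) = v} = 0 := by
        have hE : IsEmpty {c : Cons AA // iterDeg AA k (Sum.inr c) = v} :=
          ⟨fun ⟨c, hc⟩ => mix1 k a c (by rw [ha, hc])⟩
        exact Nat.card_of_isEmpty
      have hD0 : Nat.card {d : Cons BB // iterDeg BB k (Sum.inr d) = v} = 0 := by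
        have hE : IsEmpty {d : Cons BB // iterDeg BB k (Sum.inr d) = v} :=
          ⟨fun ⟨d, hd⟩ => mix3 k a d (by rw [ha, hd])⟩
        exact Nat.card_of_isEmpty
      have heq := hsplit k v
      rw [hC0, hD0] at heq
      omega
  have hnC : ∀ (k : ℕ) (v : DegT (Label σ ar) k),
      Nat.card {c : Cons AA // iterDeg AA k (Sum.inr c) = v}
      = Nat.card {d : Cons BB // iterDeg BB k (Sum.inr d) = v} := by
    intro k v
    rcases Nat.eq_zero_or_pos (Nat.card {c : Cons AA // iterDeg AA k (Sum.inr c) = v})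
      with h0 | hpos
    · rcases Nat.eq_zero_or_pos (Nat.card {d : Cons BB // iterDeg BB k (Sum.inr d) = v})
        with h0' | hpos'
      · rw [h0, h0']
      · exfalso
        obtain ⟨d, hd⟩ := (Nat.card_pos_iff.1 hpos').1
        have hA0 : Nat.card {a : A // iterDeg AA k (Sum.inl a) = v} = 0 := by
          have hE : IsEmpty {a : A // iterDeg AA k (Sum.inl a) = v} :=
            ⟨fun ⟨a, ha⟩ => mix3 k a d (by rw [ha, hd])⟩
          exact Nat.card_of_isEmpty
        have hB0 : Nat.card {b : B // iterDeg BB k (Sum.inl b) = v} = 0 := by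
          have hE : IsEmpty {b : B // iterDeg BB k (Sum.inl b) = v} :=
            ⟨fun ⟨b, hb⟩ => mix2 k b d (by rw [hb, hd])⟩
          exact Nat.card_of_isEmpty
        have heq := hsplit k v
        rw [h0, hA0, hB0] at heq
        omega
    · obtain ⟨c, hc⟩ := (Nat.card_pos_iff.1 hpos).1
      have hA0 : Nat.card {a : A // iterDeg AA k (Sum.inl a) = v} = 0 := by
        have hE : IsEmpty {a : A // iterDeg AA k (Sum.inl a) = v} :=
          ⟨fun ⟨a, ha⟩ => mix1 k a c (by rw [ha, hc])⟩
        exact Nat.card_of_isEmpty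
      have hB0 : Nat.card {b : B // iterDeg BB k (Sum.inl b) = v} = 0 := by
        have hE : IsEmpty {b : B // iterDeg BB k (Sum.inl b) = v} :=
          ⟨fun ⟨b, hb⟩ => mix4 k b c (by rw [hb, hc])⟩
        exact Nat.card_of_isEmpty
      have heq := hsplit k v
      rw [hA0, hB0] at heq
      omega
  -- stabilization
  set E := (A ⊕ Cons AA) ⊕ (B ⊕ Cons BB) with hE
  let δE : (k : ℕ) → E → DegT (Label σ ar) k :=
    fun k => Sum.elim (iterDeg AA k) (iterDeg BB k)
  have hrefE : ∀ (k : ℕ) (x y : E), δE (k+1) x = δE (k+1) y → δE k x = δE k y := by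
    rintro k (x | x) (y | y) hxy
    · exact refineStep AA AA rfl rfl k x y hxy
    · exact refineStep AA BB hAB hCD k x y hxy
    · exact (refineStep AA BB hAB hCD k y x hxy.symm).symm
    · exact refineStep BB BB rfl rfl k x y hxy
  let F : (k : ℕ) → DegT (Label σ ar) (k+1) → DegT (Label σ ar) k :=
    fun k v => if hv : ∃ x : E, δE (k+1) x = v then δE k hv.choose else default
  have hF : ∀ (k : ℕ) (x : E), F k (δE (k+1) x) = δE k x := by
    intro k x
    have hv : ∃ y : E, δE (k+1) y = δE (k+1) x := ⟨x, rfl⟩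
    show (if hv' : ∃ y : E, δE (k+1) y = δE (k+1) x then δE k hv'.choose else default) = δE k x
    rw [dif_pos hv]
    exact hrefE k _ x hv.choose_spec
  have himg : ∀ k : ℕ, Finset.image (δE k) Finset.univ
      = Finset.image (F k) (Finset.image (δE (k+1)) Finset.univ) := by
    intro k
    rw [Finset.image_image]
    exact Finset.image_congr (fun x _ => (hF k x).symm)
  have hmono : ∀ k : ℕ, (Finset.image (δE k) Finset.univ).card
      ≤ (Finset.image (δE (k+1)) Finset.univ).card := by
    intro k
    rw [himg k]
    exact Finset.card_image_le
  have hbound : ∀ k : ℕ, (Finset.image (δE k) Finset.univ).card ≤ Fintype.card E := by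
    intro k
    exact (Finset.card_image_le).trans (le_of_eq (Finset.card_univ))
  have hex : ∃ k₀ : ℕ, (Finset.image (δE k₀) Finset.univ).card
      = (Finset.image (δE (k₀+1)) Finset.univ).card := by
    by_contra hno
    push_neg at hno
    have hstrict : ∀ k, (Finset.image (δE k) Finset.univ).card
        < (Finset.image (δE (k+1)) Finset.univ).card :=
      fun k => lt_of_le_of_ne (hmono k) (hno k)
    have hgrow : ∀ k, k ≤ (Finset.image (δE k) Finset.univ).card := by
      intro k
      induction k with
      | zero => exact Nat.zero_le _
      | succ k ih => exact Nat.succ_le_of_lt (lt_of_le_of_lt ih (hstrict k))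
    have h1 := hgrow (Fintype.card E + 1)
    have h2 := hbound (Fintype.card E + 1)
    omega
  obtain ⟨k₀, hk₀⟩ := hex
  have hstab : ∀ x y : E, δE k₀ x = δE k₀ y → δE (k₀+1) x = δE (k₀+1) y := by
    intro x y hxy
    have hinj : Set.InjOn (F k₀) (Finset.image (δE (k₀+1)) Finset.univ) := by
      apply Finset.injOn_of_card_image_eq
      rw [← himg k₀]
      exact hk₀
    have hx : δE (k₀+1) x ∈ Finset.image (δE (k₀+1)) Finset.univ :=
      Finset.mem_image_of_mem _ (Finset.mem_univ x)
    have hy : δE (k₀+1) y ∈ Finset.image (δE (k₀+1)) Finset.univ :=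
      Finset.mem_image_of_mem _ (Finset.mem_univ y)
    apply hinj hx hy
    rw [hF k₀ x, hF k₀ y]
    exact hxy
  have stabAB : ∀ (a : A) (b : B),
      iterDeg AA k₀ (Sum.inl a) = iterDeg BB k₀ (Sum.inl b) →
      iterDeg AA (k₀+1) (Sum.inl a) = iterDeg BB (k₀+1) (Sum.inl b) :=
    fun a b hab => hstab (Sum.inl (Sum.inl a)) (Sum.inr (Sum.inl b)) hab
  have stabBA : ∀ (b : B) (a : A),
      iterDeg BB k₀ (Sum.inl b) = iterDeg AA k₀ (Sum.inl a) →
      iterDeg BB (k₀+1) (Sum.inl b) = iterDeg AA (k₀+1) (Sum.inl a) :=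
    fun b a hba => hstab (Sum.inr (Sum.inl b)) (Sum.inl (Sum.inl a)) hba
  have stabCC : ∀ (c c' : Cons AA),
      iterDeg AA k₀ (Sum.inr c) = iterDeg AA k₀ (Sum.inr c') →
      iterDeg AA (k₀+1) (Sum.inr c) = iterDeg AA (k₀+1) (Sum.inr c') :=
    fun c c' hcc => hstab (Sum.inl (Sum.inr c)) (Sum.inl (Sum.inr c')) hcc
  have stabDD : ∀ (d d' : Cons BB),
      iterDeg BB k₀ (Sum.inr d) = iterDeg BB k₀ (Sum.inr d') →
      iterDeg BB (k₀+1) (Sum.inr d) = iterDeg BB (k₀+1) (Sum.inr d') :=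
    fun d d' hdd => hstab (Sum.inr (Sum.inr d)) (Sum.inr (Sum.inr d')) hdd
  -- the matrices
  refine ⟨fun b a => if iterDeg AA k₀ (Sum.inl a) = iterDeg BB k₀ (Sum.inl b)
      then ((Nat.card {a' : A //
        iterDeg AA k₀ (Sum.inl a') = iterDeg BB k₀ (Sum.inl b)} : ℝ))⁻¹ else 0,
    fun d c => if iterDeg BB k₀ (Sum.inr d) = iterDeg AA k₀ (Sum.inr c)
      then ((Nat.card {c' : Cons AA //
        iterDeg AA k₀ (Sum.inr c') = iterDeg AA k₀ (Sum.inr c)} : ℝ))⁻¹ else 0,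
    ⟨?_, ?_, ?_⟩, ⟨?_, ?_, ?_⟩, ?_⟩
  · intro b a
    dsimp only
    by_cases hc : iterDeg AA k₀ (Sum.inl a) = iterDeg BB k₀ (Sum.inl b)
    · rw [if_pos hc]; positivity
    · rw [if_neg hc]
  · -- X row sums
    intro b
    dsimp only
    rw [sum_ite_const (fun a : A => iterDeg AA k₀ (Sum.inl a) = iterDeg BB k₀ (Sum.inl b))]
    have hpos : 0 < Nat.card {a' : A //
        iterDeg AA k₀ (Sum.inl a') = iterDeg BB k₀ (Sum.inl b)} := by
      rw [hnA k₀ (iterDeg BB k₀ (Sum.inl b))]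
      have : Nonempty {b' : B //
          iterDeg BB k₀ (Sum.inl b') = iterDeg BB k₀ (Sum.inl b)} := ⟨⟨b, rfl⟩⟩
      exact Nat.card_pos
    exact mul_inv_cancel₀ (Nat.cast_ne_zero.2 hpos.ne')
  · -- X column sums
    intro a
    dsimp only
    have hrw : ∀ b : B, (if iterDeg AA k₀ (Sum.inl a) = iterDeg BB k₀ (Sum.inl b)
        then ((Nat.card {a' : A //
          iterDeg AA k₀ (Sum.inl a') = iterDeg BB k₀ (Sum.inl b)} : ℝ))⁻¹ else 0)
      = (if iterDeg BB k₀ (Sum.inl b) = iterDeg AA k₀ (Sum.inl a)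
        then ((Nat.card {a' : A //
          iterDeg AA k₀ (Sum.inl a') = iterDeg AA k₀ (Sum.inl a)} : ℝ))⁻¹ else 0) := by
      intro b
      by_cases hc : iterDeg AA k₀ (Sum.inl a) = iterDeg BB k₀ (Sum.inl b)
      · rw [if_pos hc, if_pos hc.symm, ← hc]
      · rw [if_neg hc, if_neg (fun hc' => hc hc'.symm)]
    rw [Finset.sum_congr rfl (fun b _ => hrw b),
      sum_ite_const (fun b : B => iterDeg BB k₀ (Sum.inl b) = iterDeg AA k₀ (Sum.inl a))]
    rw [← hnA k₀ (iterDeg AA k₀ (Sum.inl a))]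
    have hpos : 0 < Nat.card {a' : A //
        iterDeg AA k₀ (Sum.inl a') = iterDeg AA k₀ (Sum.inl a)} := by
      have : Nonempty {a' : A //
          iterDeg AA k₀ (Sum.inl a') = iterDeg AA k₀ (Sum.inl a)} := ⟨⟨a, rfl⟩⟩
      exact Nat.card_pos
    exact mul_inv_cancel₀ (Nat.cast_ne_zero.2 hpos.ne')
  · intro d c
    dsimp only
    by_cases hc : iterDeg BB k₀ (Sum.inr d) = iterDeg AA k₀ (Sum.inr c)
    · rw [if_pos hc]; positivity
    · rw [if_neg hc]
  · -- Y row sums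
    intro d
    dsimp only
    have hrw : ∀ c : Cons AA, (if iterDeg BB k₀ (Sum.inr d) = iterDeg AA k₀ (Sum.inr c)
        then ((Nat.card {c' : Cons AA //
          iterDeg AA k₀ (Sum.inr c') = iterDeg AA k₀ (Sum.inr c)} : ℝ))⁻¹ else 0)
      = (if iterDeg AA k₀ (Sum.inr c) = iterDeg BB k₀ (Sum.inr d)
        then ((Nat.card {c' : Cons AA //
          iterDeg AA k₀ (Sum.inr c') = iterDeg BB k₀ (Sum.inr d)} : ℝ))⁻¹ else 0) := by
      intro c
      by_cases hc : iterDeg BB k₀ (Sum.inr d) = iterDeg AA k₀ (Sum.inr c)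
      · rw [if_pos hc, if_pos hc.symm, ← hc]
      · rw [if_neg hc, if_neg (fun hc' => hc hc'.symm)]
    rw [Finset.sum_congr rfl (fun c _ => hrw c),
      sum_ite_const (fun c : Cons AA => iterDeg AA k₀ (Sum.inr c) = iterDeg BB k₀ (Sum.inr d))]
    have hpos : 0 < Nat.card {c' : Cons AA //
        iterDeg AA k₀ (Sum.inr c') = iterDeg BB k₀ (Sum.inr d)} := by
      rw [hnC k₀ (iterDeg BB k₀ (Sum.inr d))]
      have : Nonempty {d' : Cons BB //
          iterDeg BB k₀ (Sum.inr d') = iterDeg BB k₀ (Sum.inr d)} := ⟨⟨d, rfl⟩⟩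
      exact Nat.card_pos
    exact mul_inv_cancel₀ (Nat.cast_ne_zero.2 hpos.ne')
  · -- Y column sums
    intro c
    dsimp only
    rw [sum_ite_const (fun d : Cons BB =>
      iterDeg BB k₀ (Sum.inr d) = iterDeg AA k₀ (Sum.inr c))]
    rw [← hnC k₀ (iterDeg AA k₀ (Sum.inr c))]
    have hpos : 0 < Nat.card {c' : Cons AA //
        iterDeg AA k₀ (Sum.inr c') = iterDeg AA k₀ (Sum.inr c)} := by
      have : Nonempty {c' : Cons AA //
          iterDeg AA k₀ (Sum.inr c') = iterDeg AA k₀ (Sum.inr c)} := ⟨⟨c, rfl⟩⟩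
      exact Nat.card_pos
    exact mul_inv_cancel₀ (Nat.cast_ne_zero.2 hpos.ne')
  · -- the intertwining equations
    intro ℓ
    constructor
    · funext b c
      erw [Matrix.mul_apply, Matrix.mul_apply]
      have hL : ∑ a : A, (if iterDeg AA k₀ (Sum.inl a) = iterDeg BB k₀ (Sum.inl b)
          then ((Nat.card {a' : A //
            iterDeg AA k₀ (Sum.inl a') = iterDeg BB k₀ (Sum.inl b)} : ℝ))⁻¹ else 0)
          * labMat AA ℓ a c
        = ((Nat.card {a' : A //
            iterDeg AA k₀ (Sum.inl a') = iterDeg BB k₀ (Sum.inl b)} : ℝ))⁻¹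
          * (Nat.card {a : A // lab AA a c = ℓ
            ∧ iterDeg AA k₀ (Sum.inl a) = iterDeg BB k₀ (Sum.inl b)} : ℝ) := by
        rw [← sum_labMat_ind' AA ℓ k₀ (iterDeg BB k₀ (Sum.inl b)) c, Finset.mul_sum]
        apply Finset.sum_congr rfl
        intro a _
        by_cases hc : iterDeg AA k₀ (Sum.inl a) = iterDeg BB k₀ (Sum.inl b)
        · rw [if_pos hc, if_pos hc]; ring
        · rw [if_neg hc, if_neg hc]; ring
      have hR : ∑ d : Cons BB, labMat BB ℓ b d
          * (if iterDeg BB k₀ (Sum.inr d) = iterDeg AA k₀ (Sum.inr c)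
          then ((Nat.card {c' : Cons AA //
            iterDeg AA k₀ (Sum.inr c') = iterDeg AA k₀ (Sum.inr c)} : ℝ))⁻¹ else 0)
        = ((Nat.card {c' : Cons AA //
            iterDeg AA k₀ (Sum.inr c') = iterDeg AA k₀ (Sum.inr c)} : ℝ))⁻¹
          * (Nat.card {d : Cons BB // lab BB b d = ℓ
            ∧ iterDeg BB k₀ (Sum.inr d) = iterDeg AA k₀ (Sum.inr c)} : ℝ) := by
        rw [← sum_labMat_ind BB ℓ k₀ (iterDeg AA k₀ (Sum.inr c)) b, Finset.mul_sum]
        apply Finset.sum_congr rfl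
        intro d _
        by_cases hc : iterDeg BB k₀ (Sum.inr d) = iterDeg AA k₀ (Sum.inr c)
        · rw [if_pos hc, if_pos hc]; ring
        · rw [if_neg hc, if_neg hc]; ring
      rw [hL, hR, inv_mul_eq_div, inv_mul_eq_div]
      exact core_ratio AA BB k₀ stabCC stabAB (hnA k₀) b c ℓ
    · funext a d
      rw [Matrix.mul_apply, Matrix.mul_apply]
      have hL : ∑ c : Cons AA, labMat AA ℓ a c
          * (if iterDeg BB k₀ (Sum.inr d) = iterDeg AA k₀ (Sum.inr c)
          then ((Nat.card {c' : Cons AA //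
            iterDeg AA k₀ (Sum.inr c') = iterDeg AA k₀ (Sum.inr c)} : ℝ))⁻¹ else 0)
        = ((Nat.card {c' : Cons AA //
            iterDeg AA k₀ (Sum.inr c') = iterDeg BB k₀ (Sum.inr d)} : ℝ))⁻¹
          * (Nat.card {c : Cons AA // lab AA a c = ℓ
            ∧ iterDeg AA k₀ (Sum.inr c) = iterDeg BB k₀ (Sum.inr d)} : ℝ) := by
        rw [← sum_labMat_ind AA ℓ k₀ (iterDeg BB k₀ (Sum.inr d)) a, Finset.mul_sum]
        apply Finset.sum_congr rfl
        intro c _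
        by_cases hc : iterDeg AA k₀ (Sum.inr c) = iterDeg BB k₀ (Sum.inr d)
        · rw [if_pos hc.symm, if_pos hc, hc]; ring
        · rw [if_neg (fun hc' => hc hc'.symm), if_neg hc]; ring
      have hR : ∑ b : B, (if iterDeg AA k₀ (Sum.inl a) = iterDeg BB k₀ (Sum.inl b)
          then ((Nat.card {a' : A //
            iterDeg AA k₀ (Sum.inl a') = iterDeg BB k₀ (Sum.inl b)} : ℝ))⁻¹ else 0)
          * labMat BB ℓ b d
        = ((Nat.card {a' : A //
            iterDeg AA k₀ (Sum.inl a') = iterDeg AA k₀ (Sum.inl a)} : ℝ))⁻¹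
          * (Nat.card {b : B // lab BB b d = ℓ
            ∧ iterDeg BB k₀ (Sum.inl b) = iterDeg AA k₀ (Sum.inl a)} : ℝ) := by
        rw [← sum_labMat_ind' BB ℓ k₀ (iterDeg AA k₀ (Sum.inl a)) d, Finset.mul_sum]
        apply Finset.sum_congr rfl
        intro b _
        by_cases hc : iterDeg BB k₀ (Sum.inl b) = iterDeg AA k₀ (Sum.inl a)
        · rw [if_pos hc.symm, if_pos hc, ← hc]; ring
        · rw [if_neg (fun hc' => hc hc'.symm), if_neg hc]; ring
      dsimp only [Matrix.transpose, Matrix.of_apply]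
      rw [hL, hR, inv_mul_eq_div, inv_mul_eq_div]
      have core := core_ratio BB AA k₀ stabDD stabBA (fun v => (hnA k₀ v).symm) a d ℓ
      rw [← hnC k₀ (iterDeg BB k₀ (Sum.inr d)), ← hnA k₀ (iterDeg AA k₀ (Sum.inl a))] at core
      exact core.symm
end BackwardMain
theorem stmt0 [Fintype σ] {A B : Type} [Fintype A] [Fintype B]
    (AA : Struct σ ar A) (BB : Struct σ ar B) :
    FracIso AA BB ↔ SameIterDeg AA BB :=
  ⟨fracIso_to_sameIterDeg, sameIterDeg_to_fracIso⟩

end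
end

section
/- Let σ be a signature and let 𝐀 and 𝐁 be σ-structures. There exist doubly stochastic matrices X (rows indexed by B, columns by A) and Y (rows indexed by 𝒞_𝐁, columns by 𝒞_𝐀) such that X M_𝐀^ℓ = M_𝐁^ℓ Y and M_𝐀^ℓ Yᵀ = Xᵀ M_𝐁^ℓ for every label ℓ ∈ L, if and only if 𝐀 and 𝐁 have a common equitable partition. -/
attribute [local instance] Classical.propDecidable

set_option maxHeartbeats 1000000

noncomputable section

variable {σ : Type} {ar : σ → ℕ}

/-- Cumulative colors for color refinement. -/
def ColT (L : Type) : ℕ → Type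
  | 0 => Unit
  | k + 1 => ColT L k × Multiset (L × ColT L k)

def col {A : Type} [Fintype σ] [Fintype A] (AA : Struct σ ar A) :
    (k : ℕ) → A ⊕ Cons AA → ColT (Label σ ar) k
  | 0, _ => ()
  | k + 1, Sum.inl a =>
      (col AA k (Sum.inl a),
        Finset.univ.val.map fun c : Cons AA => (lab AA a c, col AA k (Sum.inr c)))
  | k + 1, Sum.inr c =>
      (col AA k (Sum.inr c),
        Finset.univ.val.map fun a : A => (lab AA a c, col AA k (Sum.inl a)))

lemma col_fst {A : Type} [Fintype σ] [Fintype A] (AA : Struct σ ar A) (k : ℕ)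
    (x : A ⊕ Cons AA) : (col AA (k + 1) x).1 = col AA k x := by
  cases x <;> rfl

lemma sum_indicator_nat {α : Type} [Fintype α] (P : α → Prop) [DecidablePred P] (k : ℕ) :
    ∑ a, (if P a then k else 0) = Nat.card {a // P a} * k := by
  rw [← Finset.sum_filter, Finset.sum_const, smul_eq_mul, Nat.card_eq_fintype_card,
    Fintype.card_subtype]

lemma sum_indicator_real {α : Type} [Fintype α] (P : α → Prop) [DecidablePred P] (r : ℝ) :
    ∑ a, (if P a then r else 0) = (Nat.card {a // P a} : ℝ) * r := by
  rw [← Finset.sum_filter, Finset.sum_const, nsmul_eq_mul, Nat.card_eq_fintype_card,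
    Fintype.card_subtype]

lemma count_map_univ {α β : Type} [Fintype α] [DecidableEq β] (f : α → β) (z : β) :
    Multiset.count z (Finset.univ.val.map f) = Nat.card {x // f x = z} := by
  classical
  rw [Multiset.count_map, Nat.card_eq_fintype_card, Fintype.card_subtype, Finset.card_def,
    Finset.filter_val]
  exact congrArg _ (Multiset.filter_congr fun x _ => eq_comm)

lemma quad {α β : Type} [Fintype α] [Fintype β] (X : Matrix β α ℝ)
    (h0 : ∀ b a, 0 ≤ X b a) (hrow : ∀ b, ∑ a, X b a = 1) (hcol : ∀ a, ∑ b, X b a = 1)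
    (u : α → ℝ) (v : β → ℝ)
    (h1 : ∀ b, ∑ a, X b a * u a = v b) (h2 : ∀ a, ∑ b, X b a * v b = u a)
    {a : α} {b : β} (hX : X b a ≠ 0) : u a = v b := by
  have huv : ∑ a, u a ^ 2 = ∑ b, v b ^ 2 := by
    calc ∑ a, u a ^ 2 = ∑ a, u a * (∑ b, X b a * v b) := by
          refine Finset.sum_congr rfl fun a _ => by rw [h2]; ring
      _ = ∑ a, ∑ b, X b a * u a * v b := by
          refine Finset.sum_congr rfl fun a _ => by
            rw [Finset.mul_sum]; exact Finset.sum_congr rfl fun b _ => by ring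
      _ = ∑ b, ∑ a, X b a * u a * v b := Finset.sum_comm
      _ = ∑ b, v b ^ 2 := Finset.sum_congr rfl fun b _ => by
          rw [← Finset.sum_mul, h1]; ring
  have key : ∑ b, ∑ a, X b a * (u a - v b) ^ 2 = 0 := by
    have expand : ∀ b, ∑ a, X b a * (u a - v b) ^ 2
        = (∑ a, X b a * u a ^ 2) - 2 * (∑ a, X b a * u a) * v b + (∑ a, X b a) * v b ^ 2 := by
      intro b
      rw [Finset.sum_mul, Finset.mul_sum, Finset.sum_mul, ← Finset.sum_sub_distrib,
        ← Finset.sum_add_distrib]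
      exact Finset.sum_congr rfl fun a _ => by ring
    calc ∑ b, ∑ a, X b a * (u a - v b) ^ 2
        = ∑ b, ((∑ a, X b a * u a ^ 2) - 2 * (∑ a, X b a * u a) * v b + (∑ a, X b a) * v b ^ 2) :=
          Finset.sum_congr rfl fun b _ => expand b
      _ = ∑ b, ((∑ a, X b a * u a ^ 2) - 2 * v b ^ 2 + v b ^ 2) :=
          Finset.sum_congr rfl fun b _ => by rw [h1 b, hrow b]; ring
      _ = (∑ b, ∑ a, X b a * u a ^ 2) - 2 * (∑ b, v b ^ 2) + (∑ b, v b ^ 2) := by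
          rw [Finset.sum_add_distrib, Finset.sum_sub_distrib, Finset.mul_sum]
      _ = (∑ a, u a ^ 2) - 2 * (∑ b, v b ^ 2) + (∑ b, v b ^ 2) := by
          rw [Finset.sum_comm]
          congr 1; congr 1
          refine Finset.sum_congr rfl fun a _ => by rw [← Finset.sum_mul, hcol a, one_mul]
      _ = 0 := by rw [huv]; ring
  have hterm : X b a * (u a - v b) ^ 2 = 0 := by
    have h1' : ∀ b ∈ Finset.univ, (0:ℝ) ≤ ∑ a, X b a * (u a - v b) ^ 2 := fun b _ =>
      Finset.sum_nonneg fun a _ => mul_nonneg (h0 b a) (sq_nonneg _)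
    have h2' := (Finset.sum_eq_zero_iff_of_nonneg h1').mp key b (Finset.mem_univ b)
    have h3' : ∀ a ∈ Finset.univ, (0:ℝ) ≤ X b a * (u a - v b) ^ 2 := fun a _ =>
      mul_nonneg (h0 b a) (sq_nonneg _)
    exact (Finset.sum_eq_zero_iff_of_nonneg h3').mp h2' a (Finset.mem_univ a)
  have h4 := (mul_eq_zero.mp hterm).resolve_left hX
  have h5 := pow_eq_zero_iff (n := 2) (by norm_num) |>.mp h4
  linarith [sub_eq_zero.mp h5]

lemma transfer_row {α β γ : Type} [Fintype α] (X : Matrix β α ℝ)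
    (hrow : ∀ b, ∑ a, X b a = 1) (φ : α → γ) (ψ : β → γ)
    (h : ∀ a b, X b a ≠ 0 → φ a = ψ b) (d : γ) (b : β) :
    ∑ a, X b a * (if φ a = d then 1 else 0) = (if ψ b = d then 1 else 0) := by
  have e : ∀ a, X b a * (if φ a = d then 1 else 0) = X b a * (if ψ b = d then 1 else 0) := by
    intro a
    by_cases hx : X b a = 0
    · simp [hx]
    · rw [h a b hx]
  rw [Finset.sum_congr rfl fun a _ => e a, ← Finset.sum_mul, hrow, one_mul]

lemma transfer_col {α β γ : Type} [Fintype β] (X : Matrix β α ℝ)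
    (hcol : ∀ a, ∑ b, X b a = 1) (φ : α → γ) (ψ : β → γ)
    (h : ∀ a b, X b a ≠ 0 → φ a = ψ b) (d : γ) (a : α) :
    ∑ b, X b a * (if ψ b = d then 1 else 0) = (if φ a = d then 1 else 0) := by
  have e : ∀ b, X b a * (if ψ b = d then 1 else 0) = X b a * (if φ a = d then 1 else 0) := by
    intro b
    by_cases hx : X b a = 0
    · simp [hx]
    · rw [h a b hx]
  rw [Finset.sum_congr rfl fun b _ => e b, ← Finset.sum_mul, hcol, one_mul]

lemma step_sum {α β γ δ : Type} [Fintype α] [Fintype γ] [Fintype δ]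
    (M : Matrix β α ℝ) (N : Matrix α γ ℝ) (P : Matrix β δ ℝ) (Q : Matrix δ γ ℝ)
    (hMN : M * N = P * Q) (e : γ → ℝ) (e' : δ → ℝ)
    (hQ : ∀ d', ∑ c, Q d' c * e c = e' d') (b : β) :
    ∑ a, M b a * (∑ c, N a c * e c) = ∑ d', P b d' * e' d' := by
  calc ∑ a, M b a * (∑ c, N a c * e c)
      = ∑ a, ∑ c, M b a * N a c * e c := by
        refine Finset.sum_congr rfl fun a _ => ?_
        rw [Finset.mul_sum]; exact Finset.sum_congr rfl fun c _ => by ring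
    _ = ∑ c, (∑ a, M b a * N a c) * e c := by
        rw [Finset.sum_comm]
        exact Finset.sum_congr rfl fun c _ => by rw [Finset.sum_mul]
    _ = ∑ c, (P * Q) b c * e c := by
        refine Finset.sum_congr rfl fun c _ => ?_
        rw [← Matrix.mul_apply, hMN]
    _ = ∑ c, ∑ d', P b d' * Q d' c * e c := by
        refine Finset.sum_congr rfl fun c _ => by rw [Matrix.mul_apply, Finset.sum_mul]
    _ = ∑ d', ∑ c, P b d' * Q d' c * e c := Finset.sum_comm
    _ = ∑ d', P b d' * e' d' := by
        refine Finset.sum_congr rfl fun d' _ => ?_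
        rw [← hQ d', Finset.mul_sum]
        exact Finset.sum_congr rfl fun c _ => by ring

lemma sum_labcol {A : Type} [Fintype σ] [Fintype A] (AA : Struct σ ar A) (k : ℕ)
    (ℓ : Label σ ar) (d : ColT (Label σ ar) k) (a : A) :
    ∑ c, labMat AA ℓ a c * (if col AA k (Sum.inr c) = d then 1 else 0)
      = (Nat.card {c : Cons AA // (lab AA a c, col AA k (Sum.inr c)) = (ℓ, d)} : ℝ) := by
  rw [← mul_one ((Nat.card {c : Cons AA // (lab AA a c, col AA k (Sum.inr c)) = (ℓ, d)} : ℝ)),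
    ← sum_indicator_real]
  refine Finset.sum_congr rfl fun c _ => ?_
  by_cases h1 : lab AA a c = ℓ <;> by_cases h2 : col AA k (Sum.inr c) = d <;>
    simp [labMat, Prod.ext_iff, h1, h2]

lemma sum_labcol' {A : Type} [Fintype σ] [Fintype A] (AA : Struct σ ar A) (k : ℕ)
    (ℓ : Label σ ar) (d : ColT (Label σ ar) k) (c : Cons AA) :
    ∑ a, (labMat AA ℓ).transpose c a * (if col AA k (Sum.inl a) = d then 1 else 0)
      = (Nat.card {a : A // (lab AA a c, col AA k (Sum.inl a)) = (ℓ, d)} : ℝ) := by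
  rw [← mul_one ((Nat.card {a : A // (lab AA a c, col AA k (Sum.inl a)) = (ℓ, d)} : ℝ)),
    ← sum_indicator_real]
  refine Finset.sum_congr rfl fun a _ => ?_
  by_cases h1 : lab AA a c = ℓ <;> by_cases h2 : col AA k (Sum.inl a) = d <;>
    simp [labMat, Matrix.transpose_apply, Prod.ext_iff, h1, h2]

lemma key_colors {A B : Type} [Fintype σ] [Fintype A] [Fintype B]
    {AA : Struct σ ar A} {BB : Struct σ ar B}
    {X : Matrix B A ℝ} {Y : Matrix (Cons BB) (Cons AA) ℝ}
    (hX : IsDoublyStochastic X) (hY : IsDoublyStochastic Y)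
    (hM : ∀ ℓ : Label σ ar, X * labMat AA ℓ = labMat BB ℓ * Y ∧
      labMat AA ℓ * Y.transpose = X.transpose * labMat BB ℓ) (k : ℕ) :
    (∀ a b, X b a ≠ 0 → col AA k (Sum.inl a) = col BB k (Sum.inl b)) ∧
      (∀ c c', Y c' c ≠ 0 → col AA k (Sum.inr c) = col BB k (Sum.inr c')) := by
  obtain ⟨hX0, hXr, hXc⟩ := hX
  obtain ⟨hY0, hYr, hYc⟩ := hY
  induction k with
  | zero => exact ⟨fun _ _ _ => rfl, fun _ _ _ => rfl⟩
  | succ k IH =>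
    obtain ⟨IH1, IH2⟩ := IH
    constructor
    · intro a b hab
      have cardeq : ∀ (ℓ : Label σ ar) (d : ColT (Label σ ar) k),
          (Nat.card {c : Cons AA // (lab AA a c, col AA k (Sum.inr c)) = (ℓ, d)} : ℝ)
          = (Nat.card {c' : Cons BB // (lab BB b c', col BB k (Sum.inr c')) = (ℓ, d)} : ℝ) := by
        intro ℓ d
        set uA : A → ℝ := fun a' =>
          ∑ c, labMat AA ℓ a' c * (if col AA k (Sum.inr c) = d then 1 else 0) with huA
        set uB : B → ℝ := fun b' =>
          ∑ c', labMat BB ℓ b' c' * (if col BB k (Sum.inr c') = d then 1 else 0) with huB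
        have h1 : ∀ b', ∑ a', X b' a' * uA a' = uB b' := fun b' =>
          step_sum X (labMat AA ℓ) (labMat BB ℓ) Y (hM ℓ).1 _ _
            (fun c' => transfer_row Y hYr _ _ IH2 d c') b'
        have h2 : ∀ a', ∑ b', X b' a' * uB b' = uA a' := fun a' =>
          step_sum X.transpose (labMat BB ℓ) (labMat AA ℓ) Y.transpose ((hM ℓ).2).symm _ _
            (fun c => transfer_col Y hYc _ _ IH2 d c) a'
        have hq := quad X hX0 hXr hXc uA uB h1 h2 hab
        rw [← sum_labcol AA k ℓ d a, ← sum_labcol BB k ℓ d b]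
        exact hq
      have e1 : col AA (k+1) (Sum.inl a)
          = (col AA k (Sum.inl a),
             Finset.univ.val.map fun c : Cons AA => (lab AA a c, col AA k (Sum.inr c))) := rfl
      have e2 : col BB (k+1) (Sum.inl b)
          = (col BB k (Sum.inl b),
             Finset.univ.val.map fun c' : Cons BB => (lab BB b c', col BB k (Sum.inr c'))) := rfl
      rw [e1, e2]
      refine (Prod.mk.injEq _ _ _ _).mpr ?_
      refine ⟨IH1 a b hab, ?_⟩
      refine Multiset.ext.mpr fun z => ?_
      obtain ⟨ℓ, d⟩ := z
      rw [count_map_univ, count_map_univ]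
      exact_mod_cast cardeq ℓ d
    · intro c c' hcc
      have cardeq : ∀ (ℓ : Label σ ar) (d : ColT (Label σ ar) k),
          (Nat.card {a : A // (lab AA a c, col AA k (Sum.inl a)) = (ℓ, d)} : ℝ)
          = (Nat.card {b : B // (lab BB b c', col BB k (Sum.inl b)) = (ℓ, d)} : ℝ) := by
        intro ℓ d
        have hMN1 : Y * (labMat AA ℓ).transpose = (labMat BB ℓ).transpose * X := by
          have h := congrArg Matrix.transpose (hM ℓ).2
          rw [Matrix.transpose_mul, Matrix.transpose_mul, Matrix.transpose_transpose,
            Matrix.transpose_transpose] at h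
          exact h
        have hMN2 : Y.transpose * (labMat BB ℓ).transpose
            = (labMat AA ℓ).transpose * X.transpose := by
          have h := congrArg Matrix.transpose (hM ℓ).1
          rw [Matrix.transpose_mul, Matrix.transpose_mul] at h
          exact h.symm
        set wA : Cons AA → ℝ := fun c0 =>
          ∑ a, (labMat AA ℓ).transpose c0 a * (if col AA k (Sum.inl a) = d then 1 else 0) with hwA
        set wB : Cons BB → ℝ := fun c0 =>
          ∑ b, (labMat BB ℓ).transpose c0 b * (if col BB k (Sum.inl b) = d then 1 else 0) with hwB
        have h1 : ∀ c0', ∑ c0, Y c0' c0 * wA c0 = wB c0' := fun c0' =>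
          step_sum Y (labMat AA ℓ).transpose (labMat BB ℓ).transpose X hMN1 _ _
            (fun b => transfer_row X hXr _ _ IH1 d b) c0'
        have h2 : ∀ c0, ∑ c0', Y c0' c0 * wB c0' = wA c0 := fun c0 =>
          step_sum Y.transpose (labMat BB ℓ).transpose (labMat AA ℓ).transpose X.transpose hMN2 _ _
            (fun a => transfer_col X hXc _ _ IH1 d a) c0
        have hq := quad Y hY0 hYr hYc wA wB h1 h2 hcc
        rw [← sum_labcol' AA k ℓ d c, ← sum_labcol' BB k ℓ d c']
        exact hq
      have e1 : col AA (k+1) (Sum.inr c)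
          = (col AA k (Sum.inr c),
             Finset.univ.val.map fun a : A => (lab AA a c, col AA k (Sum.inl a))) := rfl
      have e2 : col BB (k+1) (Sum.inr c')
          = (col BB k (Sum.inr c'),
             Finset.univ.val.map fun b : B => (lab BB b c', col BB k (Sum.inl b))) := rfl
      rw [e1, e2]
      refine (Prod.mk.injEq _ _ _ _).mpr ?_
      refine ⟨IH2 c c' hcc, ?_⟩
      refine Multiset.ext.mpr fun z => ?_
      obtain ⟨ℓ, d⟩ := z
      rw [count_map_univ, count_map_univ]
      exact_mod_cast cardeq ℓ d

lemma exists_stable {S : Type} [Fintype S] {T : ℕ → Type} (f : ∀ k, S → T k)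
    (fst : ∀ k, T (k + 1) → T k) (hfst : ∀ k x, fst k (f (k + 1) x) = f k x) :
    ∃ k, ∀ x y : S, f k x = f k y → f (k + 1) x = f (k + 1) y := by
  classical
  set N : ℕ → ℕ := fun k => (Finset.univ.image (f k)).card with hN
  have himg : ∀ k, Finset.univ.image (f k) = (Finset.univ.image (f (k + 1))).image (fst k) := by
    intro k
    rw [Finset.image_image]
    exact Finset.image_congr fun x _ => (hfst k x).symm
  have hmono : ∀ k, N k ≤ N (k + 1) := by
    intro k
    rw [hN]
    simp only
    rw [himg k]
    exact Finset.card_image_le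
  have hbd : ∀ k, N k ≤ Fintype.card S := fun k =>
    le_trans Finset.card_image_le (le_of_eq (Finset.card_univ))
  have hex : ∃ k, N k = N (k + 1) := by
    by_contra hcon
    push_neg at hcon
    have hstrict : ∀ k, N k + 1 ≤ N (k + 1) := fun k =>
      Nat.succ_le_of_lt (lt_of_le_of_ne (hmono k) (hcon k))
    have hgrow : ∀ k, k ≤ N k := by
      intro k
      induction k with
      | zero => exact Nat.zero_le _
      | succ k ih => exact le_trans (Nat.succ_le_succ ih) (hstrict k)
    exact absurd (le_trans (hgrow (Fintype.card S + 1)) (hbd _)) (by omega)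
  obtain ⟨k, hk⟩ := hex
  refine ⟨k, fun x y hxy => ?_⟩
  have hinj : Set.InjOn (fst k) (Finset.univ.image (f (k + 1))) := by
    apply Finset.injOn_of_card_image_eq
    rw [← himg k]
    simp only [hN] at hk
    exact hk
  have hx : f (k + 1) x ∈ Finset.univ.image (f (k + 1)) :=
    Finset.mem_image_of_mem _ (Finset.mem_univ x)
  have hy : f (k + 1) y ∈ Finset.univ.image (f (k + 1)) :=
    Finset.mem_image_of_mem _ (Finset.mem_univ y)
  refine hinj hx hy ?_
  rw [hfst k x, hfst k y, hxy]

lemma card_transfer {α β γ : Type} [Fintype α] [Fintype β] (X : Matrix β α ℝ)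
    (hXr : ∀ b, ∑ a, X b a = 1) (hXc : ∀ a, ∑ b, X b a = 1)
    (φ : α → γ) (ψ : β → γ) (h : ∀ a b, X b a ≠ 0 → φ a = ψ b) (i : γ) :
    Nat.card {a // φ a = i} = Nat.card {b // ψ b = i} := by
  have key : (Nat.card {a // φ a = i} : ℝ) = (Nat.card {b // ψ b = i} : ℝ) := by
    rw [← mul_one (Nat.card {a // φ a = i} : ℝ), ← sum_indicator_real,
      ← mul_one (Nat.card {b // ψ b = i} : ℝ), ← sum_indicator_real]
    calc ∑ a, (if φ a = i then (1:ℝ) else 0)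
        = ∑ a, (∑ b, X b a) * (if φ a = i then 1 else 0) :=
          Finset.sum_congr rfl fun a _ => by rw [hXc a, one_mul]
      _ = ∑ a, ∑ b, X b a * (if φ a = i then 1 else 0) :=
          Finset.sum_congr rfl fun a _ => by rw [Finset.sum_mul]
      _ = ∑ b, ∑ a, X b a * (if φ a = i then 1 else 0) := Finset.sum_comm
      _ = ∑ b, (if ψ b = i then (1:ℝ) else 0) :=
          Finset.sum_congr rfl fun b _ => transfer_row X hXr φ ψ h i b
  exact_mod_cast key

lemma frac_to_equitable {A B : Type} [Fintype σ] {AA : Struct σ ar A} {BB : Struct σ ar B}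
    [Fintype A] [Fintype B] (h : FracIso AA BB) : CommonEquitable AA BB := by
  obtain ⟨X, Y, hX, hY, hM⟩ := h
  obtain ⟨hX0, hXr, hXc⟩ := id hX
  obtain ⟨hY0, hYr, hYc⟩ := id hY
  set colS : ∀ k : ℕ, (A ⊕ Cons AA) ⊕ (B ⊕ Cons BB) → ColT (Label σ ar) k :=
    fun k => Sum.elim (col AA k) (col BB k) with hcolS
  obtain ⟨k0, hk0⟩ := exists_stable colS (fun k => Prod.fst)
    (fun k x => by
      cases x with
      | inl x => exact col_fst AA k x
      | inr x => exact col_fst BB k x)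
  have K := key_colors hX hY hM k0
  refine ⟨ColT (Label σ ar) k0, ColT (Label σ ar) k0,
    fun a => col AA k0 (Sum.inl a), fun c => col AA k0 (Sum.inr c),
    fun b => col BB k0 (Sum.inl b), fun c' => col BB k0 (Sum.inr c'),
    fun ℓ i j => if h : ∃ x, colS k0 x = i
      then Multiset.count (ℓ, j) (colS (k0+1) h.choose).2 else 0,
    fun ℓ j i => if h : ∃ x, colS k0 x = j
      then Multiset.count (ℓ, i) (colS (k0+1) h.choose).2 else 0,
    ⟨?_, ?_⟩, ⟨?_, ?_⟩, ?_, ?_⟩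
  · intro a ℓ j
    beta_reduce
    have hex : ∃ x, colS k0 x = col AA k0 (Sum.inl a) := ⟨Sum.inl (Sum.inl a), rfl⟩
    rw [dif_pos hex, hk0 _ (Sum.inl (Sum.inl a)) hex.choose_spec]
    have hrfl : (colS (k0+1) (Sum.inl (Sum.inl a))).2
        = Finset.univ.val.map (fun c : Cons AA => (lab AA a c, col AA k0 (Sum.inr c))) := rfl
    rw [hrfl, count_map_univ]
    exact Nat.card_congr (Equiv.subtypeEquivRight fun c => by simp [Prod.ext_iff, and_comm])
  · intro c ℓ i
    beta_reduce
    have hex : ∃ x, colS k0 x = col AA k0 (Sum.inr c) := ⟨Sum.inl (Sum.inr c), rfl⟩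
    rw [dif_pos hex, hk0 _ (Sum.inl (Sum.inr c)) hex.choose_spec]
    have hrfl : (colS (k0+1) (Sum.inl (Sum.inr c))).2
        = Finset.univ.val.map (fun a : A => (lab AA a c, col AA k0 (Sum.inl a))) := rfl
    rw [hrfl, count_map_univ]
    exact Nat.card_congr (Equiv.subtypeEquivRight fun a => by simp [Prod.ext_iff, and_comm])
  · intro b ℓ j
    beta_reduce
    have hex : ∃ x, colS k0 x = col BB k0 (Sum.inl b) := ⟨Sum.inr (Sum.inl b), rfl⟩
    rw [dif_pos hex, hk0 _ (Sum.inr (Sum.inl b)) hex.choose_spec]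
    have hrfl : (colS (k0+1) (Sum.inr (Sum.inl b))).2
        = Finset.univ.val.map (fun c' : Cons BB => (lab BB b c', col BB k0 (Sum.inr c'))) := rfl
    rw [hrfl, count_map_univ]
    exact Nat.card_congr (Equiv.subtypeEquivRight fun c' => by simp [Prod.ext_iff, and_comm])
  · intro c' ℓ i
    beta_reduce
    have hex : ∃ x, colS k0 x = col BB k0 (Sum.inr c') := ⟨Sum.inr (Sum.inr c'), rfl⟩
    rw [dif_pos hex, hk0 _ (Sum.inr (Sum.inr c')) hex.choose_spec]
    have hrfl : (colS (k0+1) (Sum.inr (Sum.inr c'))).2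
        = Finset.univ.val.map (fun b : B => (lab BB b c', col BB k0 (Sum.inl b))) := rfl
    rw [hrfl, count_map_univ]
    exact Nat.card_congr (Equiv.subtypeEquivRight fun b => by simp [Prod.ext_iff, and_comm])
  · exact fun i => card_transfer X hXr hXc _ _ K.1 i
  · exact fun j => card_transfer Y hYr hYc _ _ K.2 j

lemma doubleCount {A : Type} [Fintype σ] [Fintype A] {AA : Struct σ ar A}
    {I J : Type} {pA : A → I} {qA : Cons AA → J}
    {cpar : Label σ ar → I → J → ℕ} {dpar : Label σ ar → J → I → ℕ}
    (hA : IsEquitable AA pA qA cpar dpar) (ℓ : Label σ ar) (i : I) (j : J) :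
    Nat.card {a : A // pA a = i} * cpar ℓ i j
      = Nat.card {c : Cons AA // qA c = j} * dpar ℓ j i := by
  have lhs : ∑ a : A, ∑ c : Cons AA, (if pA a = i ∧ (qA c = j ∧ lab AA a c = ℓ) then 1 else 0)
      = Nat.card {a : A // pA a = i} * cpar ℓ i j := by
    have inner : ∀ a : A,
        ∑ c : Cons AA, (if pA a = i ∧ (qA c = j ∧ lab AA a c = ℓ) then 1 else 0)
        = if pA a = i then cpar ℓ i j else 0 := by
      intro a
      by_cases h : pA a = i
      · rw [if_pos h]
        calc ∑ c : Cons AA, (if pA a = i ∧ (qA c = j ∧ lab AA a c = ℓ) then 1 else 0)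
            = ∑ c : Cons AA, (if qA c = j ∧ lab AA a c = ℓ then 1 else 0) :=
              Finset.sum_congr rfl fun c _ => by simp [h]
          _ = Nat.card {c : Cons AA // qA c = j ∧ lab AA a c = ℓ} * 1 :=
              sum_indicator_nat _ 1
          _ = cpar ℓ i j := by rw [mul_one, hA.1 a ℓ j, h]
      · exact (Finset.sum_eq_zero fun c _ => by simp [h]).trans (if_neg h).symm
    rw [Finset.sum_congr rfl fun a _ => inner a, sum_indicator_nat]
  have rhs : ∑ c : Cons AA, ∑ a : A, (if pA a = i ∧ (qA c = j ∧ lab AA a c = ℓ) then 1 else 0)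
      = Nat.card {c : Cons AA // qA c = j} * dpar ℓ j i := by
    have inner : ∀ c : Cons AA,
        ∑ a : A, (if pA a = i ∧ (qA c = j ∧ lab AA a c = ℓ) then 1 else 0)
        = if qA c = j then dpar ℓ j i else 0 := by
      intro c
      by_cases h : qA c = j
      · rw [if_pos h]
        calc ∑ a : A, (if pA a = i ∧ (qA c = j ∧ lab AA a c = ℓ) then 1 else 0)
            = ∑ a : A, (if pA a = i ∧ lab AA a c = ℓ then 1 else 0) :=
              Finset.sum_congr rfl fun a _ => by simp [h]
          _ = Nat.card {a : A // pA a = i ∧ lab AA a c = ℓ} * 1 :=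
              sum_indicator_nat _ 1
          _ = dpar ℓ j i := by rw [mul_one, hA.2 c ℓ i, h]
      · exact (Finset.sum_eq_zero fun a _ => by simp [h]).trans (if_neg h).symm
    rw [Finset.sum_congr rfl fun c _ => inner c, sum_indicator_nat]
  rw [← lhs, Finset.sum_comm, rhs]

lemma equitable_to_frac {A B : Type} [Fintype σ] {AA : Struct σ ar A} {BB : Struct σ ar B}
    [Fintype A] [Fintype B] (h : CommonEquitable AA BB) : FracIso AA BB := by
  obtain ⟨I, J, pA, qA, pB, qB, cpar, dpar, hA, hB, hsP, hsQ⟩ := h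
  have hnA : ∀ a : A, 0 < Nat.card {a' : A // pA a' = pA a} := fun a =>
    @Nat.card_pos _ ⟨⟨a, rfl⟩⟩ _
  have hnB : ∀ b : B, 0 < Nat.card {a : A // pA a = pB b} := fun b => by
    rw [hsP (pB b)]; exact @Nat.card_pos _ ⟨⟨b, rfl⟩⟩ _
  have hmA : ∀ c : Cons AA, 0 < Nat.card {c0 : Cons AA // qA c0 = qA c} := fun c =>
    @Nat.card_pos _ ⟨⟨c, rfl⟩⟩ _
  have hmB : ∀ c' : Cons BB, 0 < Nat.card {c0 : Cons AA // qA c0 = qB c'} := fun c' => by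
    rw [hsQ (qB c')]; exact @Nat.card_pos _ ⟨⟨c', rfl⟩⟩ _
  refine ⟨fun b a => if pA a = pB b then (Nat.card {a' : A // pA a' = pB b} : ℝ)⁻¹ else 0,
    fun c' c => if qA c = qB c' then (Nat.card {c0 : Cons AA // qA c0 = qB c'} : ℝ)⁻¹ else 0,
    ⟨?_, ?_, ?_⟩, ⟨?_, ?_, ?_⟩, ?_⟩
  · intro b a
    beta_reduce
    by_cases h : pA a = pB b <;> simp [h]
  · intro b
    beta_reduce
    rw [sum_indicator_real, mul_inv_cancel₀]
    exact_mod_cast (hnB b).ne'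
  · intro a
    beta_reduce
    have step : ∀ b : B, (if pA a = pB b then (Nat.card {a' : A // pA a' = pB b} : ℝ)⁻¹ else 0)
        = (if pB b = pA a then (Nat.card {a' : A // pA a' = pA a} : ℝ)⁻¹ else 0) := by
      intro b
      by_cases h : pA a = pB b
      · rw [if_pos h, if_pos h.symm, ← h]
      · rw [if_neg h, if_neg fun hh => h hh.symm]
    rw [Finset.sum_congr rfl fun b _ => step b, sum_indicator_real, ← hsP (pA a),
      mul_inv_cancel₀]
    exact_mod_cast (hnA a).ne'
  · intro c' c
    beta_reduce
    by_cases h : qA c = qB c' <;> simp [h]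
  · intro c'
    beta_reduce
    rw [sum_indicator_real, mul_inv_cancel₀]
    exact_mod_cast (hmB c').ne'
  · intro c
    beta_reduce
    have step : ∀ c' : Cons BB,
        (if qA c = qB c' then (Nat.card {c0 : Cons AA // qA c0 = qB c'} : ℝ)⁻¹ else 0)
        = (if qB c' = qA c then (Nat.card {c0 : Cons AA // qA c0 = qA c} : ℝ)⁻¹ else 0) := by
      intro c'
      by_cases h : qA c = qB c'
      · rw [if_pos h, if_pos h.symm, ← h]
      · rw [if_neg h, if_neg fun hh => h hh.symm]
    rw [Finset.sum_congr rfl fun c' _ => step c', sum_indicator_real, ← hsQ (qA c),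
      mul_inv_cancel₀]
    exact_mod_cast (hmA c).ne'
  · intro ℓ
    constructor
    · ext b c
      show ∑ a, (if pA a = pB b then (Nat.card {a' : A // pA a' = pB b} : ℝ)⁻¹ else 0)
          * labMat AA ℓ a c = ∑ c', labMat BB ℓ b c'
          * (if qA c = qB c' then (Nat.card {c0 : Cons AA // qA c0 = qB c'} : ℝ)⁻¹ else 0)
      have l1 : ∀ a : A,
          (if pA a = pB b then (Nat.card {a' : A // pA a' = pB b} : ℝ)⁻¹ else 0)
            * labMat AA ℓ a c
          = (if pA a = pB b ∧ lab AA a c = ℓ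
              then (Nat.card {a' : A // pA a' = pB b} : ℝ)⁻¹ else 0) := by
        intro a
        simp only [labMat]
        by_cases h1 : pA a = pB b
        · by_cases h2 : lab AA a c = ℓ
          · rw [if_pos h1, if_pos h2, mul_one, if_pos ⟨h1, h2⟩]
          · rw [if_neg h2, mul_zero,
              if_neg (show ¬(pA a = pB b ∧ lab AA a c = ℓ) from fun hh => h2 hh.2)]
        · rw [if_neg h1, zero_mul,
            if_neg (show ¬(pA a = pB b ∧ lab AA a c = ℓ) from fun hh => h1 hh.1)]
      have r1 : ∀ c' : Cons BB,
          labMat BB ℓ b c'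
            * (if qA c = qB c' then (Nat.card {c0 : Cons AA // qA c0 = qB c'} : ℝ)⁻¹ else 0)
          = (if qB c' = qA c ∧ lab BB b c' = ℓ
              then (Nat.card {c0 : Cons AA // qA c0 = qA c} : ℝ)⁻¹ else 0) := by
        intro c'
        simp only [labMat]
        by_cases h2 : qA c = qB c'
        · by_cases h1 : lab BB b c' = ℓ
          · rw [if_pos h1, if_pos h2, one_mul, if_pos ⟨h2.symm, h1⟩, h2]
          · rw [if_neg h1, zero_mul,
              if_neg (show ¬(qB c' = qA c ∧ lab BB b c' = ℓ) from fun hh => h1 hh.2)]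
        · rw [if_neg h2, mul_zero,
            if_neg (show ¬(qB c' = qA c ∧ lab BB b c' = ℓ) from fun hh => h2 hh.1.symm)]
      rw [Finset.sum_congr rfl fun a _ => l1 a, sum_indicator_real, hA.2 c ℓ (pB b),
        Finset.sum_congr rfl fun c' _ => r1 c', sum_indicator_real, hB.1 b ℓ (qA c)]
      have hd : ((Nat.card {a : A // pA a = pB b} : ℝ)) * (cpar ℓ (pB b) (qA c) : ℝ)
          = ((Nat.card {c0 : Cons AA // qA c0 = qA c} : ℝ)) * (dpar ℓ (qA c) (pB b) : ℝ) := by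
        exact_mod_cast doubleCount hA ℓ (pB b) (qA c)
      have h1 : (Nat.card {a' : A // pA a' = pB b} : ℝ) ≠ 0 := by
        exact_mod_cast (hnB b).ne'
      have h2 : (Nat.card {c0 : Cons AA // qA c0 = qA c} : ℝ) ≠ 0 := by
        exact_mod_cast (hmA c).ne'
      rw [← div_eq_mul_inv, ← div_eq_mul_inv, div_eq_div_iff h1 h2]
      linear_combination -hd
    · ext a c'
      show ∑ c, labMat AA ℓ a c
          * (if qA c = qB c' then (Nat.card {c0 : Cons AA // qA c0 = qB c'} : ℝ)⁻¹ else 0)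
          = ∑ b, (if pA a = pB b then (Nat.card {a' : A // pA a' = pB b} : ℝ)⁻¹ else 0)
          * labMat BB ℓ b c'
      have l1 : ∀ c : Cons AA,
          labMat AA ℓ a c
            * (if qA c = qB c' then (Nat.card {c0 : Cons AA // qA c0 = qB c'} : ℝ)⁻¹ else 0)
          = (if qA c = qB c' ∧ lab AA a c = ℓ
              then (Nat.card {c0 : Cons AA // qA c0 = qB c'} : ℝ)⁻¹ else 0) := by
        intro c
        simp only [labMat]
        by_cases h2 : qA c = qB c'
        · by_cases h1 : lab AA a c = ℓ
          · rw [if_pos h1, if_pos h2, one_mul, if_pos ⟨h2, h1⟩]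
          · rw [if_neg h1, zero_mul,
              if_neg (show ¬(qA c = qB c' ∧ lab AA a c = ℓ) from fun hh => h1 hh.2)]
        · rw [if_neg h2, mul_zero,
            if_neg (show ¬(qA c = qB c' ∧ lab AA a c = ℓ) from fun hh => h2 hh.1)]
      have r1 : ∀ b : B,
          (if pA a = pB b then (Nat.card {a' : A // pA a' = pB b} : ℝ)⁻¹ else 0)
            * labMat BB ℓ b c'
          = (if pB b = pA a ∧ lab BB b c' = ℓ
              then (Nat.card {a' : A // pA a' = pA a} : ℝ)⁻¹ else 0) := by
        intro b
        simp only [labMat]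
        by_cases h1 : pA a = pB b
        · by_cases h2 : lab BB b c' = ℓ
          · rw [if_pos h1, if_pos h2, mul_one, if_pos ⟨h1.symm, h2⟩, h1]
          · rw [if_neg h2, mul_zero,
              if_neg (show ¬(pB b = pA a ∧ lab BB b c' = ℓ) from fun hh => h2 hh.2)]
        · rw [if_neg h1, zero_mul,
            if_neg (show ¬(pB b = pA a ∧ lab BB b c' = ℓ) from fun hh => h1 hh.1.symm)]
      rw [Finset.sum_congr rfl fun c _ => l1 c, sum_indicator_real, hA.1 a ℓ (qB c'),
        Finset.sum_congr rfl fun b _ => r1 b, sum_indicator_real, hB.2 c' ℓ (pA a)]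
      have hd : ((Nat.card {a' : A // pA a' = pA a} : ℝ)) * (cpar ℓ (pA a) (qB c') : ℝ)
          = ((Nat.card {c0 : Cons AA // qA c0 = qB c'} : ℝ)) * (dpar ℓ (qB c') (pA a) : ℝ) := by
        exact_mod_cast doubleCount hA ℓ (pA a) (qB c')
      have h1 : (Nat.card {a' : A // pA a' = pA a} : ℝ) ≠ 0 := by
        exact_mod_cast (hnA a).ne'
      have h2 : (Nat.card {c0 : Cons AA // qA c0 = qB c'} : ℝ) ≠ 0 := by
        exact_mod_cast (hmB c').ne'
      rw [← div_eq_mul_inv, ← div_eq_mul_inv, div_eq_div_iff h2 h1]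
      linear_combination hd

theorem stmt1 [Fintype σ] {A B : Type} [Fintype A] [Fintype B]
    (AA : Struct σ ar A) (BB : Struct σ ar B) :
    FracIso AA BB ↔ CommonEquitable AA BB := by
  exact ⟨frac_to_equitable, equitable_to_frac⟩

end
end
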